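/- arXiv:0902.2258 — 6 statements merged into one kernel-verified Lean document; each statement's English description precedes it below -/
import Mathlib

section
/- Let L be a locally compact Hausdorff topological group, G a dense subgroup of L (so G is a locally precompact group), U an open subset of G, and τ an infinite cardinal such that U is τ-precompact in G. Then every cellular family in the subspace U (i.e., every family of pairwise disjoint nonempty open subsets of U) has cardinality at most τ. In other words, c(U) ≤ ip(U). -/
open Set Topology Pointwise

universe u

/-- A subset `X` of a topological group `G` is `τ`-precompact if for every neighborhood `U`
of the identity there is `S ⊆ X` with `|S| ≤ τ` and `X ⊆ (S*U) ∩ (U*S)`. -/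
def IsTauPrecompact {G : Type u} [Group G] [TopologicalSpace G] (τ : Cardinal.{u}) (X : Set G) : Prop :=
  ∀ U ∈ nhds (1 : G), ∃ S : Set G, S ⊆ X ∧ Cardinal.mk ↥S ≤ τ ∧ X ⊆ (S * U) ∩ (U * S)

/-- If `G` is a dense subgroup of a locally compact Hausdorff group `L` (so `G` is locally
precompact), `U` is an open subset of `G`, and `U` is `τ`-precompact for an infinite cardinal
`τ`, then every cellular family (pairwise disjoint family of nonempty open sets) in the
subspace `U` has cardinality at most `τ`; i.e., `c(U) ≤ ip(U)`. -/
theorem cellularity_le_precompactness_index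
    {L : Type u} [Group L] [TopologicalSpace L] [IsTopologicalGroup L]
    [LocallyCompactSpace L] [T2Space L]
    (G : Subgroup L) (hdense : Dense (G : Set L))
    (U : Set ↥G) (hUopen : IsOpen U)
    (τ : Cardinal.{u}) (hτ : Cardinal.aleph0 ≤ τ)
    (hpre : IsTauPrecompact τ U)
    (C : Set (Set ↥U))
    (hopen : ∀ V ∈ C, IsOpen V) (hne : ∀ V ∈ C, V.Nonempty)
    (hdisj : C.PairwiseDisjoint id) :
    Cardinal.mk ↥C ≤ τ := by
  classical
  borelize L
  -- a compact neighborhood of 1 in L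
  obtain ⟨K, hKcomp, hKnhds⟩ := exists_compact_mem_nhds (1 : L)
  set W : Set L := interior K with hWdef
  have hWopen : IsOpen W := isOpen_interior
  have h1W : (1 : L) ∈ W := mem_interior_iff_mem_nhds.mpr hKnhds
  -- the corresponding neighborhood of 1 in G
  have hWG : (Subtype.val ⁻¹' W : Set ↥G) ∈ nhds (1 : ↥G) := by
    apply ContinuousAt.preimage_mem_nhds continuous_subtype_val.continuousAt
    simpa using hWopen.mem_nhds h1W
  obtain ⟨S, hSU, hScard, hScover⟩ := hpre _ hWG
  -- for each cell V, choose an open set O V of L inducing the image of V in G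
  have hOex : ∀ V : ↥C, ∃ O : Set L, IsOpen O ∧
      (Subtype.val ⁻¹' O : Set ↥G) = Subtype.val '' (V.1 : Set ↥U) := by
    intro V
    have himg : IsOpen (Subtype.val '' (V.1 : Set ↥U) : Set ↥G) :=
      hUopen.isOpenMap_subtype_val _ (hopen V.1 V.2)
    rwa [isOpen_induced_iff] at himg
  choose O hOopen hOpre using hOex
  -- points of a cell give points of O V
  have hmemO : ∀ (V : ↥C) (u : ↥U), u ∈ V.1 → ((u : ↥G) : L) ∈ O V := by
    intro V u hu
    have : (u : ↥G) ∈ (Subtype.val ⁻¹' O V : Set ↥G) := by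
      rw [hOpre]; exact ⟨u, hu, rfl⟩
    exact this
  -- the O V are pairwise disjoint, by density of G
  have hOdisj : ∀ V V' : ↥C, V ≠ V' → Disjoint (O V) (O V') := by
    intro V V' hVV'
    rw [Set.disjoint_left]
    intro x hxV hxV'
    have hopenI : IsOpen (O V ∩ O V') := (hOopen V).inter (hOopen V')
    obtain ⟨g, hgG, hgI⟩ := hdense.exists_mem_open hopenI ⟨x, hxV, hxV'⟩
    have h1 : (⟨g, hgG⟩ : ↥G) ∈ (Subtype.val ⁻¹' O V : Set ↥G) := hgI.1
    have h2 : (⟨g, hgG⟩ : ↥G) ∈ (Subtype.val ⁻¹' O V' : Set ↥G) := hgI.2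
    rw [hOpre] at h1 h2
    obtain ⟨u, huV, hu⟩ := h1
    obtain ⟨u', huV', hu'⟩ := h2
    have : u = u' := Subtype.val_injective (hu.trans hu'.symm)
    subst this
    have hVsub : V.1 ≠ V'.1 := fun h => hVV' (Subtype.ext h)
    exact Set.disjoint_left.mp (hdisj V.2 V'.2 hVsub) huV huV'
  -- choose for each cell a point, and a translating element from S
  choose u huV using fun V : ↥C => hne V.1 V.2
  have hcov : ∀ V : ↥C, ((u V : ↥G) : ↥G) ∈ S * (Subtype.val ⁻¹' W : Set ↥G) := by
    intro V
    exact ((hScover (u V).2).1)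
  have hcov' : ∀ V : ↥C, ∃ s ∈ S, ∃ w ∈ (Subtype.val ⁻¹' W : Set ↥G), s * w = ((u V : ↥G)) := by
    intro V
    exact Set.mem_mul.mp (hcov V)
  choose s hsS w hwW hswu using hcov'
  -- the assignment of a cell to its translating element
  set f : ↥C → ↥S := fun V => ⟨s V, hsS V⟩ with hfdef
  -- each fiber of f is countable, via Haar measure
  have hfiber : ∀ s0 : ↥S, Countable {V : ↥C // f V = s0} := by
    intro s0
    set sl : L := ((s0 : ↥G) : L) with hsldef
    set μ : MeasureTheory.Measure L := MeasureTheory.Measure.haar with hμdef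
    set As : {V : ↥C // f V = s0} → Set L := fun i => O i.1 ∩ sl • W with hAsdef
    have hAsopen : ∀ i, IsOpen (As i) := fun i => (hOopen i.1).inter (hWopen.smul sl)
    have hAsmble : ∀ i, MeasurableSet (As i) := fun i => (hAsopen i).measurableSet
    have hAsdisj : Pairwise (Function.onFun Disjoint As) := by
      intro i j hij
      have : i.1 ≠ j.1 := fun h => hij (Subtype.ext h)
      exact ((hOdisj i.1 j.1 this).mono inf_le_left inf_le_left)
    have hUnion : μ (⋃ i, As i) ≠ ⊤ := by
      refine ne_top_of_le_ne_top (((hKcomp.smul sl).measure_lt_top (μ := μ)).ne) ?_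
      apply MeasureTheory.measure_mono
      refine Set.iUnion_subset fun i => ?_
      exact (Set.inter_subset_right).trans (Set.smul_set_mono interior_subset)
    have hpos : ∀ i, 0 < μ (As i) := by
      intro i
      refine (hAsopen i).measure_pos μ ?_
      refine ⟨((u i.1 : ↥G) : L), hmemO i.1 (u i.1) (huV i.1), ?_⟩
      refine ⟨((w i.1 : ↥G) : L), hwW i.1, ?_⟩
      have h1 : s i.1 = (s0 : ↥G) := congrArg Subtype.val i.2
      have h2 : s i.1 * w i.1 = (u i.1 : ↥G) := hswu i.1
      rw [h1] at h2
      calc sl * ((w i.1 : ↥G) : L) = (((s0 : ↥G) * w i.1 : ↥G) : L) := by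
            push_cast [hsldef]; ring_nf
        _ = ((u i.1 : ↥G) : L) := by rw [h2]
    have hcnt := MeasureTheory.Measure.countable_meas_pos_of_disjoint_of_meas_iUnion_ne_top
      μ hAsmble hAsdisj hUnion
    have : ({i : {V : ↥C // f V = s0} | 0 < μ (As i)}) = Set.univ :=
      Set.eq_univ_of_forall fun i => hpos i
    rw [this, Set.countable_univ_iff] at hcnt
    exact hcnt
  -- count: |C| ≤ |S| * ℵ₀ ≤ τ
  have hmain : Cardinal.mk ↥C ≤ Cardinal.mk ↥S * Cardinal.aleph0 := by
    refine Cardinal.mk_le_mk_mul_of_mk_preimage_le f ?_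
    intro s0
    rw [Cardinal.mk_le_aleph0_iff]
    have : f ⁻¹' {s0} = {V : ↥C | f V = s0} := rfl
    rw [this]
    exact hfiber s0
  calc Cardinal.mk ↥C ≤ Cardinal.mk ↥S * Cardinal.aleph0 := hmain
    _ ≤ τ * τ := mul_le_mul' hScard hτ
    _ = τ := Cardinal.mul_eq_self hτ
end

section
/- Let L be a locally compact Hausdorff topological group, G a dense subgroup of L, and U an open subset of G. If the closure of U in G is Dieudonné complete and U is τ-precompact for some infinite cardinal τ that is not Ulam-measurable (i.e., ip(U) < 𝔪), then the closure of U in G is realcompact. -/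
open Set Topology Pointwise

universe u

/-- A space is realcompact if it admits a closed embedding into some power of `ℝ`. -/
def RealcompactSpace (X : Type u) [TopologicalSpace X] : Prop :=
  ∃ (ι : Type u) (f : X → ι → ℝ), Topology.IsClosedEmbedding f

/-- A space is Dieudonné complete if it admits a closed embedding into a product of
metrizable spaces. -/
def DieudonneComplete (X : Type u) [TopologicalSpace X] : Prop :=
  ∃ (ι : Type u) (M : ι → Type u) (tM : ∀ i, TopologicalSpace (M i))
    (_ : ∀ i, @TopologicalSpace.MetrizableSpace (M i) (tM i))
    (f : X → ∀ i, M i),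
    @Topology.IsClosedEmbedding X (∀ i, M i) _ (@Pi.topologicalSpace ι M tM) f

/-- A type carries an Ulam ultrafilter if it carries a nonprincipal countably complete
ultrafilter. -/
def CarriesUlamUltrafilter (α : Type u) : Prop :=
  ∃ f : Ultrafilter α, (∀ a : α, f ≠ pure a) ∧ CountableInterFilter (f : Filter α)

/-- A cardinal is Ulam-measurable if some (equivalently, every) set of that cardinality
carries a nonprincipal countably complete (σ-complete) ultrafilter. -/
def Cardinal.IsUlamMeasurable (c : Cardinal.{u}) : Prop :=
  ∃ α : Type u, Cardinal.mk α = c ∧ CarriesUlamUltrafilter α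


/-! ### Auxiliary machinery -/

theorem isUlamMeasurable_of_carries {J : Type u} (hJ : CarriesUlamUltrafilter J)
    {τ : Cardinal.{u}} (hτ : Cardinal.aleph0 ≤ τ) (hle : Cardinal.mk J ≤ τ) :
    τ.IsUlamMeasurable := by
  obtain ⟨f, hnp, hσ⟩ := hJ
  haveI := hσ
  let K : Type u := J ⊕ τ.out
  let g : J → K := Sum.inl
  have hginj : Function.Injective g := Sum.inl_injective
  refine ⟨K, ?_, Ultrafilter.map g f, ?_, ?_⟩
  · show Cardinal.mk (J ⊕ τ.out) = τ
    simp only [Cardinal.mk_sum, Cardinal.lift_id, Cardinal.mk_out]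
    exact Cardinal.add_eq_right hτ hle
  · intro x h
    have h2 : g ⁻¹' ({x} : Set K) ∈ f := by
      have h1 : ({x} : Set K) ∈ Ultrafilter.map g f := by rw [h]; exact Filter.singleton_mem_pure
      exact h1
    rcases x with a | b
    · have h3 : g ⁻¹' ({Sum.inl a} : Set K) = {a} := by
        ext y
        constructor
        · intro hy; exact Sum.inl_injective hy
        · intro hy
          have hya : y = a := hy
          show Sum.inl y ∈ ({Sum.inl a} : Set K)
          rw [hya]; rfl
      rw [h3] at h2
      have := (f.neBot.eq_pure_iff (x := a)).2 h2
      exact hnp a (Ultrafilter.coe_injective (by rw [this]; rfl))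
    · have h3 : g ⁻¹' ({Sum.inr b} : Set K) = ∅ := by
        ext y; simp [g]
      rw [h3] at h2
      exact f.neBot.ne (Filter.empty_mem_iff_bot.mp h2)
  · constructor
    intro S hSc hS
    have h1 : ⋂₀ ((fun t => g ⁻¹' t) '' S) ∈ f :=
      (countable_sInter_mem (hSc.image _)).2 (by rintro _ ⟨s, hs, rfl⟩; exact hS s hs)
    rw [Set.sInter_image] at h1
    have h2 : g ⁻¹' ⋂₀ S ∈ f := by rw [Set.preimage_sInter]; exact h1
    exact h2

namespace RCAux

noncomputable section


variable {N : Type u} [MetricSpace N]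

/-- Evaluation map into the product over all continuous real functions. -/
def evalMap (N : Type u) [MetricSpace N] : N → C(N, ℝ) → ℝ := fun x g => g x

variable {p : C(N, ℝ) → ℝ}

theorem Pclosed (hp : p ∈ closure (Set.range (evalMap N))) {s : Set (C(N, ℝ) → ℝ)}
    (hs : IsClosed s) (hr : ∀ x, evalMap N x ∈ s) : p ∈ s :=
  closure_minimal (Set.range_subset_iff.2 hr) hs hp

theorem Pmul (hp : p ∈ closure (Set.range (evalMap N))) (f g : C(N, ℝ)) :
    p (f * g) = p f * p g := by
  have : p ∈ {q : C(N, ℝ) → ℝ | q (f * g) = q f * q g} := by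
    refine Pclosed hp (isClosed_eq (continuous_apply _) ((continuous_apply f).mul (continuous_apply g))) ?_
    intro x; simp [evalMap]
  exact this

theorem Psub (hp : p ∈ closure (Set.range (evalMap N))) (f g : C(N, ℝ)) :
    p (f - g) = p f - p g := by
  have : p ∈ {q : C(N, ℝ) → ℝ | q (f - g) = q f - q g} := by
    refine Pclosed hp (isClosed_eq (continuous_apply _) ((continuous_apply f).sub (continuous_apply g))) ?_
    intro x; simp [evalMap]
  exact this

theorem Padd (hp : p ∈ closure (Set.range (evalMap N))) (f g : C(N, ℝ)) :
    p (f + g) = p f + p g := by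
  have : p ∈ {q : C(N, ℝ) → ℝ | q (f + g) = q f + q g} := by
    refine Pclosed hp (isClosed_eq (continuous_apply _) ((continuous_apply f).add (continuous_apply g))) ?_
    intro x; simp [evalMap]
  exact this

theorem Pconst (hp : p ∈ closure (Set.range (evalMap N))) (c : ℝ) :
    p (ContinuousMap.const N c) = c := by
  have : p ∈ {q : C(N, ℝ) → ℝ | q (ContinuousMap.const N c) = c} := by
    refine Pclosed hp (isClosed_eq (continuous_apply _) continuous_const) ?_
    intro x; simp [evalMap]
  exact this

theorem Ple (hp : p ∈ closure (Set.range (evalMap N))) {f g : C(N, ℝ)} (h : f ≤ g) :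
    p f ≤ p g := by
  have : p ∈ {q : C(N, ℝ) → ℝ | q f ≤ q g} := by
    refine Pclosed hp (isClosed_le (continuous_apply f) (continuous_apply g)) ?_
    intro x; exact h x
  exact this

theorem Pexists (hp : p ∈ closure (Set.range (evalMap N))) (f : C(N, ℝ)) :
    ∃ x, f x = p f := by
  by_contra hno
  push_neg at hno
  have hcont : Continuous fun x => (f x - p f)⁻¹ :=
    ((map_continuous f).sub continuous_const).inv₀ fun x => sub_ne_zero.2 (hno x)
  set g : C(N, ℝ) := ⟨fun x => (f x - p f)⁻¹, hcont⟩ with hg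
  have hmul : g * (f - ContinuousMap.const N (p f)) = ContinuousMap.const N 1 := by
    ext x
    simp only [ContinuousMap.mul_apply, ContinuousMap.sub_apply, ContinuousMap.const_apply, hg,
      ContinuousMap.coe_mk]
    exact inv_mul_cancel₀ (sub_ne_zero.2 (hno x))
  have h1 : p (g * (f - ContinuousMap.const N (p f))) = 1 := by rw [hmul, Pconst hp]
  rw [Pmul hp, Psub hp, Pconst hp, sub_self, mul_zero] at h1
  exact zero_ne_one h1


theorem PexistsSeq (hp : p ∈ closure (Set.range (evalMap N))) (f : ℕ → C(N, ℝ)) :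
    ∃ x, ∀ n, f n x = p (f n) := by
  classical
  set c : ℕ → ℝ := fun n => p (f n) with hc
  -- the square functions
  set q : ℕ → C(N, ℝ) := fun n => (f n - ContinuousMap.const N (c n)) * (f n - ContinuousMap.const N (c n)) with hq
  have hq0 : ∀ n, p (q n) = 0 := by
    intro n
    rw [hq]
    simp only
    rw [Pmul hp, Psub hp, Pconst hp, sub_self, mul_zero]
  have hqnonneg : ∀ n x, 0 ≤ q n x := by
    intro n x
    simp only [hq, ContinuousMap.mul_apply, ContinuousMap.sub_apply, ContinuousMap.const_apply]
    exact mul_self_nonneg _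
  set t : ℕ → C(N, ℝ) := fun n =>
    ⟨fun x => min (q n x) 1, (map_continuous (q n)).min continuous_const⟩ with ht
  have ht0 : ∀ n, p (t n) = 0 := by
    intro n
    set M : C(N, ℝ) := ⟨fun x => max (q n x) 1, (map_continuous (q n)).max continuous_const⟩ with hM
    have hmm : t n * M = q n := by
      ext x
      simp only [ContinuousMap.mul_apply, ht, hM, ContinuousMap.coe_mk]
      have := min_mul_max (q n x) (1:ℝ)
      simpa using this
    have h1 : p (t n) * p M = 0 := by rw [← Pmul hp, hmm, hq0]
    have hM1 : (1 : ℝ) ≤ p M := by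
      have : ContinuousMap.const N (1:ℝ) ≤ M := by
        rw [ContinuousMap.le_def]; intro x; simp [hM]
      have := Ple hp this
      rwa [Pconst hp] at this
    rcases mul_eq_zero.1 h1 with h | h
    · exact h
    · exfalso; rw [h] at hM1; exact absurd hM1 (by norm_num)
  have htnonneg : ∀ n x, 0 ≤ t n x := fun n x => le_min (hqnonneg n x) zero_le_one
  have htle1 : ∀ n x, t n x ≤ 1 := fun n x => min_le_right _ _
  -- the series
  have hterm_bound : ∀ n (x : N), ‖(2⁻¹ : ℝ)^n * t n x‖ ≤ (2⁻¹:ℝ)^n := by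
    intro n x
    rw [Real.norm_eq_abs, abs_of_nonneg (mul_nonneg (pow_nonneg (by norm_num) n) (htnonneg n x))]
    calc (2⁻¹:ℝ)^n * t n x ≤ (2⁻¹:ℝ)^n * 1 :=
          mul_le_mul_of_nonneg_left (htle1 n x) (pow_nonneg (by norm_num) n)
      _ = (2⁻¹:ℝ)^n := mul_one _
  have hgeom : Summable fun n : ℕ => (2⁻¹:ℝ)^n := summable_geometric_of_lt_one (by norm_num) (by norm_num)
  have hGcont : Continuous fun x => ∑' n, (2⁻¹:ℝ)^n * t n x := by
    apply continuous_tsum (fun n => (continuous_const.mul (map_continuous (t n)))) hgeom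
    exact fun n x => hterm_bound n x
  set G : C(N, ℝ) := ⟨fun x => ∑' n, (2⁻¹:ℝ)^n * t n x, hGcont⟩ with hG
  have hsum : ∀ x : N, Summable fun n => (2⁻¹:ℝ)^n * t n x := by
    intro x
    apply Summable.of_norm_bounded hgeom
    exact fun n => hterm_bound n x
  -- p G = 0
  have hPG0 : p G = 0 := by
    have hGnonneg : (0:ℝ) ≤ p G := by
      have : ContinuousMap.const N (0:ℝ) ≤ G := by
        rw [ContinuousMap.le_def]
        intro x
        simp only [ContinuousMap.const_apply, hG, ContinuousMap.coe_mk]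
        exact tsum_nonneg fun n => mul_nonneg (by positivity) (htnonneg n x)
      have := Ple hp this; rwa [Pconst hp] at this
    have hub : ∀ K : ℕ, p G ≤ 2 * (2⁻¹:ℝ)^K := by
      intro K
      have hSKapp : ∀ (K : ℕ) (x : N), (∑ n ∈ Finset.range K, ContinuousMap.const N ((2⁻¹:ℝ)^n) * t n) x = ∑ n ∈ Finset.range K, (2⁻¹:ℝ)^n * t n x := by
        intro K x
        induction K with
        | zero => simp
        | succ k ih => rw [Finset.sum_range_succ, Finset.sum_range_succ, ContinuousMap.add_apply, ih]; simp
      have hPSKall : ∀ K : ℕ, p (∑ n ∈ Finset.range K, ContinuousMap.const N ((2⁻¹:ℝ)^n) * t n) = 0 := by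
        intro K
        induction K with
        | zero => simpa using Pconst hp 0
        | succ k ih =>
            rw [Finset.sum_range_succ, Padd hp, ih, Pmul hp, ht0, mul_zero, add_zero]
      set SK : C(N, ℝ) := ∑ n ∈ Finset.range K, ContinuousMap.const N ((2⁻¹:ℝ)^n) * t n with hSK
      have hPSK : p SK = 0 := hPSKall K
      have hle : G ≤ SK + ContinuousMap.const N (2 * (2⁻¹:ℝ)^K) := by
        rw [ContinuousMap.le_def]
        intro x
        simp only [ContinuousMap.add_apply, ContinuousMap.const_apply, hG, ContinuousMap.coe_mk]
        rw [hSK, hSKapp K x]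
        rw [← Summable.sum_add_tsum_nat_add (f := fun n => (2⁻¹:ℝ)^n * t n x) K (hsum x)]
        have htail : ∑' n, (2⁻¹:ℝ)^(n+K) * t (n+K) x ≤ 2 * (2⁻¹:ℝ)^K := by
          have h1 : ∑' n, (2⁻¹:ℝ)^(n+K) * t (n+K) x ≤ ∑' n, (2⁻¹:ℝ)^(n+K) := by
            apply Summable.tsum_le_tsum
            · intro n
              calc (2⁻¹:ℝ)^(n+K) * t (n+K) x ≤ (2⁻¹:ℝ)^(n+K) * 1 :=
                    mul_le_mul_of_nonneg_left (htle1 _ x) (by positivity)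
                _ = (2⁻¹:ℝ)^(n+K) := mul_one _
            · exact (hsum x).comp_injective (add_left_injective K)
            · exact hgeom.comp_injective (add_left_injective K)
          have h2 : ∑' n : ℕ, (2⁻¹:ℝ)^(n+K) = 2 * (2⁻¹:ℝ)^K := by
            have : ∀ n : ℕ, (2⁻¹:ℝ)^(n+K) = (2⁻¹:ℝ)^n * (2⁻¹:ℝ)^K := fun n => pow_add _ _ _
            rw [tsum_congr this, tsum_mul_right]
            have : ∑' n : ℕ, (2⁻¹:ℝ)^n = 2 := by
              have := tsum_geometric_two
              simpa [one_div] using this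
            rw [this]
          exact h1.trans (le_of_eq h2)
        linarith
      have := Ple hp hle
      rw [Padd hp, hPSK, Pconst hp, zero_add] at this
      exact this
    by_contra hne
    have hpos : 0 < p G := lt_of_le_of_ne hGnonneg (Ne.symm hne)
    obtain ⟨K, hK⟩ := exists_pow_lt_of_lt_one (by linarith : (0:ℝ) < p G / 2) (by norm_num : (2⁻¹:ℝ) < 1)
    have := hub K
    nlinarith [hK]
  obtain ⟨x, hx⟩ := Pexists hp G
  rw [hPG0] at hx
  refine ⟨x, fun n => ?_⟩
  have hterm0 : (2⁻¹:ℝ)^n * t n x = 0 := by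
    have hle' : (2⁻¹:ℝ)^n * t n x ≤ 0 := by
      calc (2⁻¹:ℝ)^n * t n x ≤ ∑' m, (2⁻¹:ℝ)^m * t m x :=
            Summable.le_tsum (hsum x) n fun m _ => mul_nonneg (by positivity) (htnonneg m x)
        _ = 0 := hx
    have hge' : 0 ≤ (2⁻¹:ℝ)^n * t n x := mul_nonneg (by positivity) (htnonneg n x)
    linarith
  have htn0 : t n x = 0 := by
    have h2 : (2⁻¹:ℝ)^n ≠ 0 := by positivity
    exact (mul_eq_zero.1 hterm0).resolve_left h2
  have hq0' : q n x = 0 := by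
    have : min (q n x) 1 = 0 := htn0
    rcases min_eq_iff.1 this with ⟨h, _⟩ | ⟨h, _⟩
    · exact h
    · norm_num at h
  have : (f n x - c n) * (f n x - c n) = 0 := by
    simpa [hq, ContinuousMap.mul_apply, ContinuousMap.sub_apply] using hq0'
  have := mul_self_eq_zero.1 this
  have : f n x = c n := by linarith
  rw [this, hc]


/-- A system of open sets of small diameter, covering `N`, organized in countably many
uniformly separated families. -/
theorem exists_goodFamily {N : Type u} [MetricSpace N] {r : ℝ} (hr : 0 < r) :
    ∃ (V : N → ℕ → Set N) (δ : ℕ → ℝ),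
      (∀ x k, IsOpen (V x k)) ∧
      (∀ x k, V x k ⊆ Metric.ball x r) ∧
      (∀ y : N, ∃ x k, y ∈ V x k) ∧
      (∀ k, 0 < δ k) ∧
      (∀ k (x x' : N), x ≠ x' → ∀ u ∈ V x k, ∀ u' ∈ V x' k, δ k < dist u u') := by
  classical
  set wr : N → N → Prop := WellOrderingRel with hwr
  have hwo : IsWellOrder N wr := WellOrderingRel.isWellOrder
  set S : N → Set N := fun x => {z | wr z x} with hS
  set α : ℕ → ℝ := fun k => r - r / (k + 2) with hα
  set β : ℕ → ℝ := fun k => r - r / (2 * k + 4) with hβ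
  have hk2 : ∀ k : ℕ, (0:ℝ) < k + 2 := fun k => by positivity
  have hk4 : ∀ k : ℕ, (0:ℝ) < 2 * k + 4 := fun k => by positivity
  have hαβ : ∀ k, α k < β k := by
    intro k
    have : r / (2 * k + 4) < r / (k + 2) := by
      apply div_lt_div_of_pos_left hr (hk2 k)
      nlinarith [hk2 k]
    simp only [hα, hβ]
    linarith
  have hβr : ∀ k, β k < r := by
    intro k
    have : 0 < r / (2 * k + 4) := div_pos hr (hk4 k)
    simp only [hβ]; linarith
  have hβ0 : ∀ k, 0 ≤ β k := by
    intro k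
    have h1 : r / (2 * k + 4) ≤ r := by
      rw [div_le_iff₀ (hk4 k)]; nlinarith
    simp only [hβ]; linarith
  set V : N → ℕ → Set N := fun x k =>
    Metric.ball x (α k) ∩ {y | ENNReal.ofReal (β k) < EMetric.infEdist y (S x)} with hV
  refine ⟨V, fun k => β k - α k, ?_, ?_, ?_, fun k => by simp only; linarith [hαβ k], ?_⟩
  · intro x k
    exact Metric.isOpen_ball.inter (isOpen_Ioi.preimage EMetric.continuous_infEdist)
  · intro x k
    refine Set.inter_subset_left.trans ?_
    apply Metric.ball_subset_ball
    have : 0 < r / (k + 2) := div_pos hr (hk2 k)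
    simp only [hα]; linarith
  · -- covering
    intro y
    have hsne : ({x | dist y x < r} : Set N).Nonempty := ⟨y, by simpa using hr⟩
    have hwf : WellFounded wr := hwo.toIsWellFounded.wf
    set x₀ := hwf.min {x | dist y x < r} hsne with hx0
    have hmem : dist y x₀ < r := hwf.min_mem _ hsne
    -- choose k with dist y x₀ < α k
    have hex : ∃ k : ℕ, dist y x₀ < α k := by
      set ε := r - dist y x₀ with hε
      have hεpos : 0 < ε := by simp only [hε]; linarith
      obtain ⟨n, hn⟩ := exists_nat_gt (r / ε)
      refine ⟨n, ?_⟩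
      have h2 : r / (n + 2) < ε := by
        have hrε : r / ε < n + 2 := by push_cast; linarith
        rw [div_lt_iff₀ (hk2 n)]
        rw [div_lt_iff₀ hεpos] at hrε
        nlinarith
      simp only [hα, hε] at h2 ⊢
      linarith
    obtain ⟨k, hk⟩ := hex
    refine ⟨x₀, k, hk, ?_⟩
    show ENNReal.ofReal (β k) < EMetric.infEdist y (S x₀)
    have hge : ENNReal.ofReal r ≤ EMetric.infEdist y (S x₀) := by
      apply EMetric.le_infEdist.2
      intro z hz
      have hznot : ¬ dist y z < r := by
        intro hlt
        exact hwf.not_lt_min {x | dist y x < r} hlt hz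
      have hge' : r ≤ dist y z := not_lt.1 hznot
      rw [edist_dist]
      exact ENNReal.ofReal_le_ofReal hge'
    calc ENNReal.ofReal (β k) < ENNReal.ofReal r := by
          exact (ENNReal.ofReal_lt_ofReal_iff hr).2 (hβr k)
      _ ≤ _ := hge
  · -- separation
    intro k x x' hne u hu u' hu'
    have key : ∀ a b : N, wr a b → ∀ v ∈ V b k, ∀ w ∈ V a k, β k - α k < dist v w := by
      intro a b hab v hv w hw
      have hv2 : ENNReal.ofReal (β k) < EMetric.infEdist v (S b) := hv.2
      have hav : EMetric.infEdist v (S b) ≤ edist v a := EMetric.infEdist_le_edist_of_mem hab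
      have h1 : ENNReal.ofReal (β k) < edist v a := lt_of_lt_of_le hv2 hav
      rw [edist_dist] at h1
      have h1' : β k < dist v a := by
        have := (ENNReal.ofReal_lt_ofReal_iff_of_nonneg (hβ0 k)).1 h1
        exact this
      have h2 : dist w a < α k := by
        have := hw.1
        simpa [Metric.mem_ball] using this
      have htri : dist v a ≤ dist v w + dist w a := dist_triangle v w a
      linarith
    rcases trichotomous_of wr x x' with h | h | h
    · have h2 := key x x' h u' hu' u hu
      rwa [dist_comm] at h2
    · exact absurd h hne
    · exact key x' x h u hu u' hu'

/-- The distance-to-a-set test function. -/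
def hCM (A : Set N) : C(N, ℝ) :=
  ⟨fun y => min (Metric.infDist y A) 1,
    ((Metric.lipschitz_infDist_pt A).continuous).min continuous_const⟩

theorem hCM_nonneg (A : Set N) (y : N) : 0 ≤ hCM A y :=
  le_min Metric.infDist_nonneg zero_le_one

theorem hCM_zero_iff {A : Set N} (hA : A.Nonempty) (y : N) :
    hCM A y = 0 ↔ y ∈ closure A := by
  have : hCM A y = 0 ↔ Metric.infDist y A = 0 := by
    constructor
    · intro h
      rcases min_eq_iff.1 h with ⟨h1, _⟩ | ⟨h1, _⟩
      · exact h1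
      · norm_num at h1
    · intro h; simp [hCM, h]
  rw [this, Metric.mem_closure_iff_infDist_zero hA]

theorem hCM_mono {A B : Set N} (hAB : A ⊆ B) (hA : A.Nonempty) : hCM B ≤ hCM A := by
  rw [ContinuousMap.le_def]
  intro y
  exact min_le_min (Metric.infDist_le_infDist_of_subset hAB hA) le_rfl

theorem Pnonneg_hCM (hp : p ∈ closure (Set.range (evalMap N))) (A : Set N) :
    0 ≤ p (hCM A) := by
  have h : ContinuousMap.const N (0:ℝ) ≤ hCM A := by
    rw [ContinuousMap.le_def]; intro y; simpa using hCM_nonneg A y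
  have := Ple hp h
  rwa [Pconst hp] at this

theorem L1 (hp : p ∈ closure (Set.range (evalMap N)))
    (hcell : ∀ (J : Type u) (W : J → Set N), (∀ j, IsOpen (W j)) → (∀ j, (W j).Nonempty) →
      Pairwise (Function.onFun Disjoint W) → ¬ CarriesUlamUltrafilter J)
    {r : ℝ} (hr : 0 < r) :
    ∃ (y : N) (f : C(N, ℝ)), p f = 0 ∧ (∀ x, 0 ≤ f x) ∧ ∀ x, f x = 0 → dist x y ≤ r := by
  classical
  obtain ⟨V, δ, hVopen, hVball, hVcover, hδpos, hVsep⟩ := exists_goodFamily (N := N) hr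
  set Uk : ℕ → Set N := fun k => ⋃ x, V x k with hUk
  -- step 1 : find a scale with mass
  obtain ⟨xb, hxb⟩ := PexistsSeq hp (fun k => hCM (Uk k))
  obtain ⟨x₀, k₀, hmem⟩ := hVcover xb
  have hUne : (Uk k₀).Nonempty := ⟨xb, Set.mem_iUnion.2 ⟨x₀, hmem⟩⟩
  have hval : hCM (Uk k₀) xb = 0 := by
    have : Metric.infDist xb (Uk k₀) = 0 :=
      Metric.infDist_zero_of_mem (Set.mem_iUnion.2 ⟨x₀, hmem⟩)
    simp [hCM, this]
  have hP0 : p (hCM (Uk k₀)) = 0 := by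
    have := hxb k₀
    rw [← this, hval]
  set δ₀ : ℝ := δ k₀ with hδ₀
  have hδ₀pos : 0 < δ₀ := hδpos k₀
  set V' : N → Set N := fun x => V x k₀ with hV'
  set J := {x : N // (V' x).Nonempty} with hJ
  set Uw : Set J → Set N := fun w => ⋃ a ∈ w, V' a.1 with hUw
  -- geometric facts
  have sep' : ∀ a b : J, a ≠ b → ∀ u ∈ V' a.1, ∀ u' ∈ V' b.1, δ₀ < dist u u' := by
    intro a b hab u hu u' hu'
    have : a.1 ≠ b.1 := fun h => hab (Subtype.ext h)
    exact hVsep k₀ a.1 b.1 this u hu u' hu'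
  have locate : ∀ (w : Set J) (y : N), y ∈ closure (Uw w) → ∃ a ∈ w, y ∈ closure (V' a.1) := by
    intro w y hy
    obtain ⟨z1, hz1mem, hz1d⟩ := Metric.mem_closure_iff.1 hy (δ₀ / 2) (by linarith)
    obtain ⟨a₁, ha₁w, hz1V⟩ := Set.mem_iUnion₂.1 hz1mem
    refine ⟨a₁, ha₁w, Metric.mem_closure_iff.2 fun ε hε => ?_⟩
    obtain ⟨z, hzmem, hzd⟩ := Metric.mem_closure_iff.1 hy (min ε (δ₀ / 2))
      (lt_min hε (by linarith))
    obtain ⟨az, hazw, hzV⟩ := Set.mem_iUnion₂.1 hzmem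
    by_cases h : az = a₁
    · exact ⟨z, h ▸ hzV, lt_of_lt_of_le hzd (min_le_left _ _)⟩
    · exfalso
      have h1 := sep' az a₁ h z hzV z1 hz1V
      have h2 : dist z z1 ≤ dist z y + dist y z1 := dist_triangle _ _ _
      have h3 : dist z y < δ₀ / 2 := by
        rw [dist_comm]; exact lt_of_lt_of_le hzd (min_le_right _ _)
      linarith
  have uniq : ∀ (a b : J) (y : N), y ∈ closure (V' a.1) → y ∈ closure (V' b.1) → a = b := by
    intro a b y hya hyb
    by_contra hab
    obtain ⟨za, hzaV, hzad⟩ := Metric.mem_closure_iff.1 hya (δ₀ / 2) (by linarith)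
    obtain ⟨zb, hzbV, hzbd⟩ := Metric.mem_closure_iff.1 hyb (δ₀ / 2) (by linarith)
    have h1 := sep' a b hab za hzaV zb hzbV
    have h2 : dist za zb ≤ dist za y + dist y zb := dist_triangle _ _ _
    rw [dist_comm] at hzad
    linarith
  have zero_of_cl : ∀ (w : Set J) (a : J), a ∈ w → ∀ y, y ∈ closure (V' a.1) →
      hCM (Uw w) y = 0 := by
    intro w a haw y hy
    have hsub : V' a.1 ⊆ Uw w := Set.subset_biUnion_of_mem (u := fun a : J => V' a.1) haw
    have hne : (Uw w).Nonempty := a.2.mono hsub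
    exact (hCM_zero_iff hne y).2 (closure_mono hsub hy)
  have yzero : ∀ (w : Set J) (y : N), (Uw w).Nonempty → hCM (Uw w) y = 0 →
      ∃ a ∈ w, y ∈ closure (V' a.1) := by
    intro w y hne h0
    exact locate w y ((hCM_zero_iff hne y).1 h0)
  -- the family of "large" sets
  set 𝔘 : Set (Set J) := {w | (Uw w).Nonempty ∧ p (hCM (Uw w)) = 0} with h𝔘
  have hUwUniv : Uw Set.univ = Uk k₀ := by
    apply Set.eq_of_subset_of_subset
    · intro y hy
      obtain ⟨a, _, h⟩ := Set.mem_iUnion₂.1 hy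
      exact Set.mem_iUnion.2 ⟨a.1, h⟩
    · intro y hy
      obtain ⟨x, h⟩ := Set.mem_iUnion.1 hy
      exact Set.mem_iUnion₂.2 ⟨⟨x, ⟨y, h⟩⟩, Set.mem_univ _, h⟩
  have hUniv𝔘 : Set.univ ∈ 𝔘 := by
    constructor
    · rw [hUwUniv]; exact hUne
    · rw [hUwUniv]; exact hP0
  have hEmpty : ∅ ∉ 𝔘 := by
    intro h
    have := h.1
    simp [hUw] at this
  -- upward closed
  have hUp : ∀ w w' : Set J, w ⊆ w' → w ∈ 𝔘 → w' ∈ 𝔘 := by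
    intro w w' hsub hw
    have hUsub : Uw w ⊆ Uw w' := Set.biUnion_subset_biUnion_left hsub
    have hne' : (Uw w').Nonempty := hw.1.mono hUsub
    refine ⟨hne', le_antisymm ?_ ?_⟩
    · calc p (hCM (Uw w')) ≤ p (hCM (Uw w)) := Ple hp (hCM_mono hUsub hw.1)
        _ = 0 := hw.2
    · exact Pnonneg_hCM hp _
  -- intersection
  have hInter : ∀ w1 w2 : Set J, w1 ∈ 𝔘 → w2 ∈ 𝔘 → w1 ∩ w2 ∈ 𝔘 := by
    intro w1 w2 hw1 hw2
    -- nonempty of intersection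
    have step : ∃ a, a ∈ w1 ∩ w2 := by
      obtain ⟨y, hy⟩ := PexistsSeq hp (fun i => if i = 0 then hCM (Uw w1) else hCM (Uw w2))
      have hy0 : hCM (Uw w1) y = 0 := by
        have := hy 0; norm_num at this; rw [this, hw1.2]
      have hy1 : hCM (Uw w2) y = 0 := by
        have := hy 1; norm_num at this; rw [this, hw2.2]
      obtain ⟨a1, ha1, hcl1⟩ := yzero w1 y hw1.1 hy0
      obtain ⟨a2, ha2, hcl2⟩ := yzero w2 y hw2.1 hy1
      have : a1 = a2 := uniq a1 a2 y hcl1 hcl2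
      exact ⟨a1, ha1, this ▸ ha2⟩
    obtain ⟨a0, ha0⟩ := step
    have hneI : (Uw (w1 ∩ w2)).Nonempty := a0.2.mono (Set.subset_biUnion_of_mem (u := fun a : J => V' a.1) ha0)
    refine ⟨hneI, ?_⟩
    obtain ⟨y, hy⟩ := PexistsSeq hp
      (fun i => if i = 0 then hCM (Uw (w1 ∩ w2)) else if i = 1 then hCM (Uw w1) else hCM (Uw w2))
    have hy1 : hCM (Uw w1) y = 0 := by
      have := hy 1
      norm_num at this
      rw [this, hw1.2]
    have hy2 : hCM (Uw w2) y = 0 := by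
      have := hy 2
      norm_num at this
      rw [this, hw2.2]
    obtain ⟨a1, ha1, hcl1⟩ := yzero w1 y hw1.1 hy1
    obtain ⟨a2, ha2, hcl2⟩ := yzero w2 y hw2.1 hy2
    have heq : a1 = a2 := uniq a1 a2 y hcl1 hcl2
    have haI : a1 ∈ w1 ∩ w2 := ⟨ha1, heq ▸ ha2⟩
    have h0 : hCM (Uw (w1 ∩ w2)) y = 0 := zero_of_cl _ a1 haI y hcl1
    have := hy 0
    norm_num at this
    rw [← this, h0]
  -- ultra
  have hUltra : ∀ w : Set J, w ∈ 𝔘 ∨ wᶜ ∈ 𝔘 := by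
    intro w
    have hunion : Uw w ∪ Uw wᶜ = Uw Set.univ := by
      rw [hUw]
      simp only
      rw [← Set.biUnion_union w wᶜ]
      rw [Set.union_compl_self]
    rcases Set.eq_empty_or_nonempty (Uw w) with hwe | hwne
    · right
      have : Uw wᶜ = Uw Set.univ := by rw [← hunion, hwe, Set.empty_union]
      rw [h𝔘]
      constructor
      · rw [this, hUwUniv]; exact hUne
      · rw [this, hUwUniv]; exact hP0
    rcases Set.eq_empty_or_nonempty (Uw wᶜ) with hce | hcne
    · left
      have : Uw w = Uw Set.univ := by rw [← hunion, hce, Set.union_empty]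
      constructor
      · rw [this, hUwUniv]; exact hUne
      · rw [this, hUwUniv]; exact hP0
    obtain ⟨y, hy⟩ := PexistsSeq hp
      (fun i => if i = 0 then hCM (Uw Set.univ) else if i = 1 then hCM (Uw w) else hCM (Uw wᶜ))
    have hyU : hCM (Uw Set.univ) y = 0 := by
      have := hy 0; norm_num at this
      rw [this]
      have h2 : p (hCM (Uw Set.univ)) = 0 := by rw [hUwUniv]; exact hP0
      exact h2
    have hycl : y ∈ closure (Uw Set.univ) := by
      apply (hCM_zero_iff _ y).1 hyU
      rw [hUwUniv]; exact hUne
    rw [← hunion, closure_union] at hycl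
    rcases hycl with hyl | hyr
    · left
      have h0 : hCM (Uw w) y = 0 := (hCM_zero_iff hwne y).2 hyl
      have := hy 1
      norm_num at this
      exact ⟨hwne, by rw [← this, h0]⟩
    · right
      have h0 : hCM (Uw wᶜ) y = 0 := (hCM_zero_iff hcne y).2 hyr
      have := hy 2
      norm_num at this
      exact ⟨hcne, by rw [← this, h0]⟩
  -- countable intersections
  have hSigma : ∀ ws : ℕ → Set J, (∀ i, ws i ∈ 𝔘) → (⋂ i, ws i) ∈ 𝔘 := by
    intro ws hws
    obtain ⟨y, hy⟩ := PexistsSeq hp (fun i => hCM (Uw (ws i)))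
    have hy0 : ∀ i, hCM (Uw (ws i)) y = 0 := by
      intro i
      have := hy i; rw [this, (hws i).2]
    have hcls : ∀ i, ∃ a ∈ ws i, y ∈ closure (V' a.1) := fun i =>
      yzero _ y (hws i).1 (hy0 i)
    obtain ⟨a0, ha00, hcl0⟩ := hcls 0
    have hall : ∀ i, a0 ∈ ws i := by
      intro i
      obtain ⟨ai, hai, hcli⟩ := hcls i
      have : ai = a0 := uniq ai a0 y hcli hcl0
      exact this ▸ hai
    have haI : a0 ∈ ⋂ i, ws i := Set.mem_iInter.2 hall
    have hneI : (Uw (⋂ i, ws i)).Nonempty := a0.2.mono (Set.subset_biUnion_of_mem (u := fun a : J => V' a.1) haI)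
    refine ⟨hneI, ?_⟩
    obtain ⟨y', hy'⟩ := PexistsSeq hp
      (fun i => if i = 0 then hCM (Uw (⋂ j, ws j)) else hCM (Uw (ws (i - 1))))
    have hy'0 : ∀ i, hCM (Uw (ws i)) y' = 0 := by
      intro i
      have := hy' (i + 1)
      rw [if_neg (Nat.succ_ne_zero i)] at this
      simp only [Nat.add_sub_cancel] at this
      rw [this, (hws i).2]
    have hcls' : ∀ i, ∃ a ∈ ws i, y' ∈ closure (V' a.1) := fun i =>
      yzero _ y' (hws i).1 (hy'0 i)
    obtain ⟨b0, hb00, hclb0⟩ := hcls' 0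
    have hballi : ∀ i, b0 ∈ ws i := by
      intro i
      obtain ⟨bi, hbi, hclbi⟩ := hcls' i
      have : bi = b0 := uniq bi b0 y' hclbi hclb0
      exact this ▸ hbi
    have h0 : hCM (Uw (⋂ i, ws i)) y' = 0 :=
      zero_of_cl _ b0 (Set.mem_iInter.2 hballi) y' hclb0
    have := hy' 0
    norm_num at this
    rw [← this, h0]
  -- dichotomy
  by_cases hPrin : ∃ a : J, {a} ∈ 𝔘
  · obtain ⟨a, ha⟩ := hPrin
    have hUwa : Uw {a} = V' a.1 := by
      rw [hUw]; simp
    refine ⟨a.1, hCM (Uw {a}), ha.2, fun x => hCM_nonneg _ x, ?_⟩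
    intro x hx
    have hxcl : x ∈ closure (Uw {a}) := (hCM_zero_iff ha.1 x).1 hx
    rw [hUwa] at hxcl
    have h1 : closure (V' a.1) ⊆ Metric.closedBall a.1 r := by
      calc closure (V' a.1) ⊆ closure (Metric.ball a.1 r) := closure_mono (hVball a.1 k₀)
        _ ⊆ Metric.closedBall a.1 r := Metric.closure_ball_subset_closedBall
    exact Metric.mem_closedBall.1 (h1 hxcl)
  · exfalso
    -- build a nonprincipal countably complete ultrafilter on J
    let F : Filter J := Filter.mk 𝔘 hUniv𝔘 (fun hw hsub => hUp _ _ hsub hw)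
      (fun h1 h2 => hInter _ _ h1 h2)
    have hmemF : ∀ w : Set J, w ∈ F ↔ w ∈ 𝔘 := fun w => Iff.rfl
    have hFne : F.NeBot := by
      constructor
      intro hbot
      have : ∅ ∈ F := by rw [hbot]; exact Filter.mem_bot
      exact hEmpty this
    have hcompl : ∀ w : Set J, wᶜ ∉ F ↔ w ∈ F := by
      intro w
      constructor
      · intro h
        rcases hUltra w with h1 | h1
        · exact h1
        · exact absurd h1 h
      · intro h hc
        have := hInter _ _ h hc
        rw [Set.inter_compl_self] at this
        exact hEmpty this
    set UF : Ultrafilter J := Ultrafilter.ofComplNotMemIff F hcompl with hUF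
    have hUFsets : ∀ w : Set J, w ∈ UF ↔ w ∈ 𝔘 := fun w => Iff.rfl
    have hnp : ∀ a : J, UF ≠ pure a := by
      intro a heq
      apply hPrin
      refine ⟨a, ?_⟩
      have : {a} ∈ UF := by rw [heq]; exact Filter.singleton_mem_pure
      exact (hUFsets {a}).1 this
    have hCIF : CountableInterFilter (UF : Filter J) := by
      constructor
      intro S hSc hSsub
      rcases Set.eq_empty_or_nonempty S with hSe | hSne
      · rw [hSe, Set.sInter_empty]; exact Filter.univ_mem
      · obtain ⟨f, hf⟩ := hSc.exists_eq_range hSne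
        have : ⋂₀ S = ⋂ i, f i := by rw [hf, Set.sInter_range]
        rw [this]
        exact (hUFsets _).2 (hSigma f fun i => (hUFsets _).1 (hSsub _ (by rw [hf]; exact ⟨i, rfl⟩)))
    have hcarries : CarriesUlamUltrafilter J := ⟨UF, hnp, hCIF⟩
    refine hcell J (fun a => V' a.1) (fun a => hVopen a.1 k₀) (fun a => a.2) ?_ hcarries
    intro a b hab
    rw [Function.onFun, Set.disjoint_left]
    intro u hua hub
    have := sep' a b hab u hua u hub
    simp at this
    linarith

/-- A metric space all of whose disjoint families of nonempty open sets are indexed by a set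
carrying no Ulam ultrafilter embeds closedly in a power of `ℝ`. -/
theorem metric_realcompact (N : Type u) [MetricSpace N]
    (hcell : ∀ (J : Type u) (W : J → Set N), (∀ j, IsOpen (W j)) → (∀ j, (W j).Nonempty) →
      Pairwise (Function.onFun Disjoint W) → ¬ CarriesUlamUltrafilter J) :
    ∃ (ι : Type u) (f : N → ι → ℝ), Topology.IsClosedEmbedding f := by
  classical
  refine ⟨C(N, ℝ), evalMap N, ?_, ?_⟩
  · -- embedding
    constructor
    · -- inducing
      rw [Topology.isInducing_iff_nhds]
      intro x
      apply le_antisymm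
      · -- 𝓝 x ≤ comap
        have hcont : Continuous (evalMap N) := by
          apply continuous_pi
          intro g
          exact map_continuous g
        exact hcont.continuousAt.le_comap
      · -- comap ≤ 𝓝 x
        rw [Filter.le_def]
        intro s hs
        rw [Metric.mem_nhds_iff] at hs
        obtain ⟨ε, hε, hball⟩ := hs
        set g : C(N, ℝ) := ⟨fun z => dist z x, (continuous_id.dist continuous_const)⟩ with hg
        have hmem : {q : C(N, ℝ) → ℝ | q g < ε} ∈ nhds (evalMap N x) := by
          have : Continuous fun q : C(N, ℝ) → ℝ => q g := continuous_apply g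
          have hopen : IsOpen {q : C(N, ℝ) → ℝ | q g < ε} := isOpen_lt this continuous_const
          refine hopen.mem_nhds ?_
          show evalMap N x g < ε
          simp [evalMap, hg, hε]
        refine Filter.mem_comap.2 ⟨_, hmem, ?_⟩
        intro z hz
        apply hball
        have : dist z x < ε := hz
        simpa [Metric.mem_ball] using this
    · -- injective
      intro x y hxy
      set g : C(N, ℝ) := ⟨fun z => dist z x, (continuous_id.dist continuous_const)⟩ with hg
      have : evalMap N x g = evalMap N y g := by rw [hxy]
      simp only [evalMap, hg, ContinuousMap.coe_mk] at this
      rw [dist_self] at this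
      have := this.symm
      rw [dist_eq_zero] at this
      exact this.symm ▸ rfl
  · -- closed range
    rw [← closure_subset_iff_isClosed]
    intro p hp
    -- scales
    have hstep : ∀ n : ℕ, ∃ (y : N) (f : C(N, ℝ)), p f = 0 ∧ (∀ x, 0 ≤ f x) ∧
        ∀ x, f x = 0 → dist x y ≤ 1 / (n + 1) := by
      intro n
      exact L1 hp hcell (by positivity)
    choose ys fs hfs0 hfsnn hfsz using hstep
    obtain ⟨xstar, hxstar⟩ := PexistsSeq hp fs
    have hxstar0 : ∀ n, fs n xstar = 0 := fun n => by rw [hxstar n, hfs0 n]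
    have hxstard : ∀ n, dist xstar (ys n) ≤ 1 / (n + 1) := fun n =>
      hfsz n xstar (hxstar0 n)
    have hkey : ∀ g : C(N, ℝ), g xstar = p g := by
      intro g
      obtain ⟨z, hz⟩ := PexistsSeq hp (fun i => if i = 0 then g else fs (i - 1))
      have hzg : g z = p g := by
        have := hz 0; norm_num at this; exact this
      have hzfs : ∀ n, fs n z = 0 := by
        intro n
        have := hz (n + 1)
        rw [if_neg (Nat.succ_ne_zero n)] at this
        simp only [Nat.add_sub_cancel] at this
        rw [this, hfs0 n]
      have hzd : ∀ n, dist z (ys n) ≤ 1 / (n + 1) := fun n => hfsz n z (hzfs n)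
      have hzx : z = xstar := by
        apply eq_of_dist_eq_zero
        by_contra hne
        have hpos : 0 < dist z xstar := lt_of_le_of_ne dist_nonneg (Ne.symm hne)
        obtain ⟨n, hn⟩ := exists_nat_gt (2 / dist z xstar)
        have h1 : dist z xstar ≤ dist z (ys n) + dist xstar (ys n) := dist_triangle_right _ _ _
        have h2 : dist z xstar ≤ 2 / (n + 1) := by
          have := hzd n
          have := hxstard n
          have h3 : (2:ℝ) / (n+1) = 1/(n+1) + 1/(n+1) := by ring
          linarith
        have hn1 : (0:ℝ) < n + 1 := by positivity
        rw [le_div_iff₀ hn1] at h2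
        rw [div_lt_iff₀ hpos] at hn
        nlinarith
      rw [← hzx, hzg]
    refine ⟨xstar, ?_⟩
    funext g
    exact hkey g

end
end RCAux

theorem cellX
    {L : Type u} [Group L] [TopologicalSpace L] [IsTopologicalGroup L]
    [LocallyCompactSpace L] [T2Space L]
    (G : Subgroup L) (hdense : Dense (G : Set L))
    (U : Set ↥G) (hUopen : IsOpen U)
    (τ : Cardinal.{u}) (hτ : Cardinal.aleph0 ≤ τ)
    (hpre : IsTauPrecompact τ U)
    (J : Type u) (W : J → Set ↥(closure U))
    (hWopen : ∀ j, IsOpen (W j)) (hWne : ∀ j, (W j).Nonempty)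
    (hWdisj : Pairwise (Function.onFun Disjoint W)) :
    Cardinal.mk J ≤ τ := by
  classical
  -- dense subset of points of U
  have hUpreDense : Dense {x : ↥(closure U) | (x : ↥G) ∈ U} := by
    intro x
    rw [closure_subtype]
    have himg : (Subtype.val '' {x : ↥(closure U) | (x : ↥G) ∈ U} : Set ↥G) = U := by
      apply Set.eq_of_subset_of_subset
      · rintro _ ⟨z, hz, rfl⟩; exact hz
      · intro u hu; exact ⟨⟨u, subset_closure hu⟩, hu, rfl⟩
    rw [himg]
    exact x.2
  -- represent W j by open sets of L
  have hWrep : ∀ j, ∃ B : Set L, IsOpen B ∧ W j = (fun x : ↥(closure U) => ((x : ↥G) : L)) ⁻¹' B := by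
    intro j
    obtain ⟨A, hAopen, hAeq⟩ := isOpen_induced_iff.1 (hWopen j)
    obtain ⟨B, hBopen, hBeq⟩ := isOpen_induced_iff.1 hAopen
    exact ⟨B, hBopen, by rw [← hAeq, ← hBeq]; rfl⟩
  choose B hBopen hBeq using hWrep
  obtain ⟨Ut, hUtopen, hUteq⟩ := isOpen_induced_iff.1 hUopen
  -- points z j
  have hz : ∀ j, ∃ z : ↥(closure U), z ∈ W j ∧ (z : ↥G) ∈ U := by
    intro j
    obtain ⟨z, hz1, hz2⟩ := hUpreDense.inter_open_nonempty (W j) (hWopen j) (hWne j)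
    exact ⟨z, hz1, hz2⟩
  choose z hzW hzU using hz
  -- the open sets in L
  have hPopen : ∀ j, IsOpen (B j ∩ Ut) := fun j => (hBopen j).inter hUtopen
  have hzP : ∀ j, ((z j : ↥G) : L) ∈ B j ∩ Ut := by
    intro j
    constructor
    · have := hzW j
      rw [hBeq j] at this
      exact this
    · have h1 : (z j : ↥G) ∈ Subtype.val ⁻¹' Ut := by
        rw [hUteq]; exact hzU j
      exact h1
  have hPdisj : Pairwise (Function.onFun Disjoint (fun j => B j ∩ Ut)) := by
    intro i j hij
    rw [Function.onFun, Set.disjoint_left]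
    intro y hyi hyj
    have hne : ((B i ∩ Ut) ∩ (B j ∩ Ut)).Nonempty := ⟨y, hyi, hyj⟩
    obtain ⟨g, hgP, hgG⟩ := hdense.inter_open_nonempty ((B i ∩ Ut) ∩ (B j ∩ Ut))
      ((hPopen i).inter (hPopen j)) hne
    have hgU : (⟨g, hgG⟩ : ↥G) ∈ U := by
      rw [← hUteq]
      exact hgP.1.2
    have hgWi : (⟨⟨g, hgG⟩, subset_closure hgU⟩ : ↥(closure U)) ∈ W i := by
      rw [hBeq i]; exact hgP.1.1
    have hgWj : (⟨⟨g, hgG⟩, subset_closure hgU⟩ : ↥(closure U)) ∈ W j := by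
      rw [hBeq j]; exact hgP.2.1
    exact Set.disjoint_left.1 (hWdisj hij) hgWi hgWj
  -- compact neighborhood and τ-cover
  obtain ⟨K, hKcomp, hKnhds⟩ := exists_compact_mem_nhds (1 : L)
  have hVtopen : IsOpen (interior K) := isOpen_interior
  have hVtnhds : interior K ∈ nhds (1 : L) :=
    hVtopen.mem_nhds (mem_interior_iff_mem_nhds.2 hKnhds)
  have hclVt : IsCompact (closure (interior K)) :=
    hKcomp.of_isClosed_subset isClosed_closure (closure_minimal interior_subset hKcomp.isClosed)
  have hVnhds : (Subtype.val ⁻¹' interior K : Set ↥G) ∈ nhds (1 : ↥G) := by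
    apply ContinuousAt.preimage_mem_nhds (continuous_subtype_val.continuousAt)
    simpa using hVtnhds
  obtain ⟨S, hSU, hScard, hScov⟩ := hpre _ hVnhds
  -- each z j is in some translate
  have hzS : ∀ j, ∃ s : ↥S, ((z j : ↥G) : L) ∈ ((s : ↥G) : L) • interior K := by
    intro j
    have : (z j : ↥G) ∈ S * (Subtype.val ⁻¹' interior K) := (hScov (hzU j)).1
    obtain ⟨s, hs, v, hv, hsv⟩ := this
    refine ⟨⟨s, hs⟩, ?_⟩
    rw [← hsv]
    refine ⟨(v : L), hv, rfl⟩
  -- Haar measure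
  borelize L
  set K₀ : TopologicalSpace.PositiveCompacts L := Classical.arbitrary _ with hK₀
  set μ : MeasureTheory.Measure L := MeasureTheory.Measure.haarMeasure K₀ with hμ
  haveI : μ.IsHaarMeasure := MeasureTheory.Measure.isHaarMeasure_haarMeasure K₀
  -- countability of each translate class
  have hcnt : ∀ s : ↥S, Set.Countable {j | ((B j ∩ Ut) ∩ (((s : ↥G) : L) • interior K)).Nonempty} := by
    intro s
    set b : L := ((s : ↥G) : L) with hb
    set ν : MeasureTheory.Measure L := μ.restrict (b • closure (interior K)) with hν
    haveI : MeasureTheory.IsFiniteMeasure ν := by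
      constructor
      rw [hν, MeasureTheory.Measure.restrict_apply_univ]
      exact (hclVt.smul b).measure_lt_top
    have hAmeas : ∀ j, MeasurableSet ((B j ∩ Ut) ∩ (b • interior K)) := fun j =>
      ((hPopen j).inter (hVtopen.smul b)).measurableSet
    have hAdisj : Pairwise (Function.onFun Disjoint (fun j => (B j ∩ Ut) ∩ (b • interior K))) :=
      fun i j hij => ((hPdisj hij).mono Set.inter_subset_left Set.inter_subset_left)
    have hctbl := MeasureTheory.Measure.countable_meas_pos_of_disjoint_iUnion (μ := ν) hAmeas hAdisj
    apply hctbl.mono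
    intro j hj
    show 0 < ν ((B j ∩ Ut) ∩ (b • interior K))
    rw [hν, MeasureTheory.Measure.restrict_apply (hAmeas j)]
    have hsub : ((B j ∩ Ut) ∩ (b • interior K)) ∩ (b • closure (interior K))
        = (B j ∩ Ut) ∩ (b • interior K) := by
      apply Set.inter_eq_self_of_subset_left
      exact Set.inter_subset_right.trans (Set.smul_set_mono subset_closure)
    rw [hsub]
    exact ((hPopen j).inter (hVtopen.smul b)).measure_pos μ hj
  -- build the injection
  have hjex : ∀ j : J, ∃ s : ↥S, ((B j ∩ Ut) ∩ (((s : ↥G) : L) • interior K)).Nonempty := by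
    intro j
    obtain ⟨s, hs⟩ := hzS j
    exact ⟨s, ⟨((z j : ↥G) : L), hzP j, hs⟩⟩
  choose sj hsj using hjex
  have henum : ∀ s : ↥S, ∃ f : {j | ((B j ∩ Ut) ∩ (((s : ↥G) : L) • interior K)).Nonempty} → ℕ,
      Function.Injective f := fun s => (hcnt s).exists_injective_nat
  choose enum henum_inj using henum
  -- a total version of the enumeration
  set F : ↥S → J → ℕ := fun s j =>
    if h : ((B j ∩ Ut) ∩ (((s : ↥G) : L) • interior K)).Nonempty then enum s ⟨j, h⟩ else 0
    with hF
  have hΦinj : Function.Injective (fun j => ((sj j, F (sj j) j) : ↥S × ℕ)) := by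
    intro i j hij
    simp only [Prod.mk.injEq] at hij
    obtain ⟨h1, h2⟩ := hij
    rw [← h1] at h2
    have hi' : ((B i ∩ Ut) ∩ (((sj i : ↥G) : L) • interior K)).Nonempty := hsj i
    have hj' : ((B j ∩ Ut) ∩ (((sj i : ↥G) : L) • interior K)).Nonempty := by
      rw [h1]; exact hsj j
    rw [hF] at h2
    simp only [dif_pos hi', dif_pos hj'] at h2
    have := henum_inj (sj i) h2
    exact congrArg Subtype.val this
  have hcard : Cardinal.mk J ≤ Cardinal.mk (↥S × ℕ) := Cardinal.mk_le_of_injective hΦinj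
  have hle2 : Cardinal.mk (↥S × ℕ) ≤ τ := by
    have h1 : Cardinal.mk (↥S × ℕ) = Cardinal.mk ↥S * Cardinal.aleph0 := by
      rw [Cardinal.mk_prod]
      simp
    rw [h1]
    calc Cardinal.mk ↥S * Cardinal.aleph0 ≤ τ * τ := mul_le_mul' hScard hτ
      _ = τ := Cardinal.mul_eq_self hτ
  exact hcard.trans hle2

section PiLemmas
variable {ι : Type*} {α β : ι → Type*} [∀ i, TopologicalSpace (α i)] [∀ i, TopologicalSpace (β i)]

theorem isInducing_piMap {f : ∀ i, α i → β i} (hf : ∀ i, Topology.IsInducing (f i)) :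
    Topology.IsInducing (fun (x : ∀ i, α i) i => f i (x i)) := by
  constructor
  show _ = TopologicalSpace.induced _ Pi.topologicalSpace
  rw [Pi.topologicalSpace, Pi.topologicalSpace, induced_iInf]
  apply iInf_congr
  intro i
  rw [(hf i).eq_induced, induced_compose, induced_compose]
  rfl

theorem isClosedEmbedding_piMap {f : ∀ i, α i → β i}
    (hf : ∀ i, Topology.IsClosedEmbedding (f i)) :
    Topology.IsClosedEmbedding (fun (x : ∀ i, α i) i => f i (x i)) := by
  refine ⟨⟨isInducing_piMap fun i => (hf i).toIsInducing, ?_⟩, ?_⟩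
  · intro x y hxy
    funext i
    exact (hf i).injective (congrFun hxy i)
  · have : Set.range (fun (x : ∀ i, α i) i => f i (x i)) =
        Set.pi Set.univ (fun i => Set.range (f i)) := by
      apply Set.eq_of_subset_of_subset
      · rintro _ ⟨x, rfl⟩ i _
        exact ⟨x i, rfl⟩
      · intro y hy
        choose x hx using fun i => hy i (Set.mem_univ i)
        exact ⟨x, funext hx⟩
    rw [this]
    exact isClosed_set_pi fun i _ => (hf i).isClosed_range

/-- currying homeomorphism -/
def sigmaCurryHomeo (κ : ι → Type*) : ((Σ i, κ i) → ℝ) ≃ₜ (∀ i, κ i → ℝ) where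
  toEquiv := Equiv.piCurry fun _ _ => ℝ
  continuous_toFun := by
    apply continuous_pi
    intro i
    apply continuous_pi
    intro j
    show Continuous fun f : (Σ i, κ i) → ℝ => f ⟨i, j⟩
    exact continuous_apply _
  continuous_invFun := by
    apply continuous_pi
    intro p
    show Continuous fun f : ∀ i, κ i → ℝ => f p.1 p.2
    exact (continuous_apply p.2).comp (continuous_apply p.1)

end PiLemmas

/-- If `G` is a dense subgroup of a locally compact Hausdorff group `L`, `U` an open subset
of `G` whose closure in `G` is Dieudonné complete, and `U` is `τ`-precompact for some infinite
non-Ulam-measurable cardinal `τ` (i.e. `ip(U) < 𝔪`), then the closure of `U` in `G` is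
realcompact. -/
theorem realcompact_closure_of_dieudonneComplete
    {L : Type u} [Group L] [TopologicalSpace L] [IsTopologicalGroup L]
    [LocallyCompactSpace L] [T2Space L]
    (G : Subgroup L) (hdense : Dense (G : Set L))
    (U : Set ↥G) (hUopen : IsOpen U)
    (hDC : DieudonneComplete ↥(closure U))
    (τ : Cardinal.{u}) (hτ : Cardinal.aleph0 ≤ τ) (hUlam : ¬ τ.IsUlamMeasurable)
    (hpre : IsTauPrecompact τ U) :
    RealcompactSpace ↥(closure U) := by

  classical
  obtain ⟨ι, M, tM, hmtz, e, he⟩ := hDC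
  letI : ∀ i, TopologicalSpace (M i) := tM
  haveI : ∀ i, TopologicalSpace.MetrizableSpace (M i) := hmtz
  -- the coordinate images
  let R : ∀ i, Set (M i) := fun i => Set.range (fun x : ↥(closure U) => e x i)
  let e' : ↥(closure U) → ∀ i, ↥(R i) := fun x i => ⟨e x i, ⟨x, rfl⟩⟩
  have hF : Topology.IsInducing (fun (y : ∀ i, ↥(R i)) i => (y i : M i)) :=
    isInducing_piMap fun i => Topology.IsInducing.subtypeVal
  have hcomp : (fun (y : ∀ i, ↥(R i)) i => (y i : M i)) ∘ e' = e := rfl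
  have he'cont : Continuous e' := by
    apply continuous_pi
    intro i
    apply Continuous.subtype_mk
    exact (continuous_apply i).comp he.continuous
  have he' : Topology.IsClosedEmbedding e' := by
    refine ⟨⟨?_, ?_⟩, ?_⟩
    · apply Topology.IsInducing.of_comp he'cont hF.continuous
      rw [hcomp]
      exact he.toIsInducing
    · intro x y hxy
      apply he.injective
      show (fun i => ((e' x i : M i))) = (fun i => ((e' y i : M i)))
      rw [hxy]
    · have : Set.range e' = (fun (y : ∀ i, ↥(R i)) i => (y i : M i)) ⁻¹' (Set.range e) := by
        apply Set.eq_of_subset_of_subset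
        · rintro _ ⟨x, rfl⟩
          exact ⟨x, rfl⟩
        · rintro y ⟨x, hx⟩
          refine ⟨x, funext fun i => Subtype.ext ?_⟩
          exact congrFun hx i
      rw [this]
      exact he.isClosed_range.preimage hF.continuous
  -- metrize each coordinate image
  letI : ∀ i, MetricSpace (↥(R i)) := fun i =>
    TopologicalSpace.metrizableSpaceMetric (↥(R i))
  -- cellularity hypothesis for each coordinate image
  have hcell : ∀ i, ∀ (J : Type u) (W : J → Set (↥(R i))), (∀ j, IsOpen (W j)) →
      (∀ j, (W j).Nonempty) → Pairwise (Function.onFun Disjoint W) →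
      ¬ CarriesUlamUltrafilter J := by
    intro i J W hWopen hWne hWdisj hcarr
    have hq : Continuous (fun x : ↥(closure U) => e' x i) :=
      (continuous_apply i).comp he'cont
    have hqsurj : Function.Surjective (fun x : ↥(closure U) => e' x i) := by
      rintro ⟨b, x, hx⟩
      exact ⟨x, Subtype.ext hx⟩
    have hWo' : ∀ j, IsOpen ((fun x : ↥(closure U) => e' x i) ⁻¹' W j) :=
      fun j => (hWopen j).preimage hq
    have hWn' : ∀ j, ((fun x : ↥(closure U) => e' x i) ⁻¹' W j).Nonempty := by
      intro j
      obtain ⟨b, hb⟩ := hWne j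
      obtain ⟨x, rfl⟩ := hqsurj b
      exact ⟨x, hb⟩
    have hWd' : Pairwise (Function.onFun Disjoint
        (fun j => (fun x : ↥(closure U) => e' x i) ⁻¹' W j)) := by
      intro a b hab
      exact (hWdisj hab).preimage _
    have hle := cellX G hdense U hUopen τ hτ hpre J _ hWo' hWn' hWd'
    exact hUlam (isUlamMeasurable_of_carries hcarr hτ hle)
  -- realcompactness of each coordinate image
  have hRC : ∀ i, ∃ (κ : Type u) (f : ↥(R i) → κ → ℝ), Topology.IsClosedEmbedding f :=
    fun i => RCAux.metric_realcompact (↥(R i)) (hcell i)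
  choose κ E hE using hRC
  -- assemble
  refine ⟨Σ i, κ i, (fun g => (sigmaCurryHomeo κ).symm g) ∘ (fun y i => E i (y i)) ∘ e', ?_⟩
  exact ((sigmaCurryHomeo κ).symm.isClosedEmbedding.comp
    (isClosedEmbedding_piMap hE)).comp he'
end

section
/- Let L be a locally compact Hausdorff topological group and G a dense subgroup of L that is locally pseudocompact. Then G is zero-dimensional if and only if L is zero-dimensional. -/
open Set Topology

universe u

/-- A space is pseudocompact if every continuous real-valued function on it is bounded. -/
def IsPseudocompact (X : Type u) [TopologicalSpace X] : Prop :=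
  ∀ f : X → ℝ, Continuous f → ∃ M : ℝ, ∀ x, |f x| ≤ M

/-- A topological group is locally pseudocompact if some neighborhood of the identity has
pseudocompact closure. -/
def LocallyPseudocompactGrp (G : Type u) [Group G] [TopologicalSpace G] : Prop :=
  ∃ U ∈ nhds (1 : G), IsPseudocompact ↥(closure U)

/-- A space is zero-dimensional if its clopen sets form a base for the topology. -/
def ZeroDimensional (X : Type u) [TopologicalSpace X] : Prop :=
  TopologicalSpace.IsTopologicalBasis {s : Set X | IsClopen s}

open Pointwise MeasureTheory
open scoped ENNReal

section Helpers

variable {L : Type*} [Group L] [TopologicalSpace L] [IsTopologicalGroup L]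
  [LocallyCompactSpace L] [T2Space L]

omit [LocallyCompactSpace L] [T2Space L] in
private lemma shrink' {V : Set L} (hV : IsOpen V) (h1 : (1:L) ∈ V) :
    ∃ W : Set L, IsOpen W ∧ (1:L) ∈ W ∧ W⁻¹ = W ∧ closure W ⊆ V := by
  obtain ⟨s, hs, hscl, hsV⟩ := exists_mem_nhds_isClosed_subset (hV.mem_nhds h1)
  refine ⟨interior s ∩ (interior s)⁻¹, (isOpen_interior.inter isOpen_interior.inv), ?_, ?_, ?_⟩
  · exact ⟨mem_interior_iff_mem_nhds.2 hs, by simpa using mem_interior_iff_mem_nhds.2 hs⟩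
  · simp [Set.inter_comm]
  · refine subset_trans (closure_mono fun x hx => hx.1) ?_
    exact (closure_minimal interior_subset hscl).trans hsV

omit [T2Space L] in
private lemma urysohn' [T2Space L] {ξ : L} {Ω : Set L} (hΩ : IsOpen Ω) (hξ : ξ ∈ Ω) :
    ∃ φ : L → ℝ, Continuous φ ∧ φ ξ = 1 ∧ (∀ z, z ∉ Ω → φ z = 0) ∧ ∀ z, φ z ∈ Icc (0:ℝ) 1 := by
  obtain ⟨f, hf1, hf0, -, hficc⟩ :=
    exists_continuous_one_zero_of_isCompact (isCompact_singleton (x := ξ))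
      (hΩ.isClosed_compl) (by simpa using hξ)
  exact ⟨f, f.continuous, hf1 rfl, fun z hz => hf0 hz, hficc⟩

/-- A chain of symmetric open neighborhoods of `1`, nested through closures,
which eventually separates compact sets inside given open sets. -/
private lemma chain_exists' (V₀ : Set L) (hV₀o : IsOpen V₀) (h1V₀ : (1:L) ∈ V₀)
    (hV₀s : V₀⁻¹ = V₀)
    (C : ℕ → Set L) (hC : ∀ m, IsCompact (C m)) (O' : ℕ → Set L) (hO' : ∀ m, IsOpen (O' m))
    (hCO : ∀ m, C m ⊆ O' m) :
    ∃ V : ℕ → Set L, V 0 = V₀ ∧ (∀ n, IsOpen (V n)) ∧ (∀ n, (1:L) ∈ V n) ∧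
      (∀ n, (V n)⁻¹ = V n) ∧ (∀ n, closure (V (n+1)) ⊆ V n) ∧
      (∀ n m, m ≤ n → C m * V (n+1) ⊆ O' m) := by
  have hnbhd : ∀ n : ℕ, ∃ T : Set L, T ∈ 𝓝 (1:L) ∧ ∀ m ≤ n, C m * T ⊆ O' m := by
    intro n
    induction n with
    | zero =>
      obtain ⟨T, hT, hTC⟩ := compact_open_separated_mul_right (hC 0) (hO' 0) (hCO 0)
      exact ⟨T, hT, fun m hm => by interval_cases m; exact hTC⟩
    | succ n ih =>
      obtain ⟨T, hT, hTC⟩ := ih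
      obtain ⟨T', hT', hTC'⟩ :=
        compact_open_separated_mul_right (hC (n+1)) (hO' (n+1)) (hCO (n+1))
      refine ⟨T ∩ T', Filter.inter_mem hT hT', fun m hm => ?_⟩
      rcases Nat.lt_succ_iff_lt_or_eq.mp (Nat.lt_succ_of_le hm) with h | h
      · exact (Set.mul_subset_mul_left inter_subset_left).trans (hTC m (Nat.lt_succ_iff.mp h))
      · subst h
        exact (Set.mul_subset_mul_left inter_subset_right).trans hTC'
  have step : ∀ (n : ℕ) (A : Set L), IsOpen A → (1:L) ∈ A →
      ∃ B : Set L, (IsOpen B ∧ (1:L) ∈ B ∧ B⁻¹ = B) ∧ closure B ⊆ A ∧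
        ∀ m ≤ n, C m * B ⊆ O' m := by
    intro n A hA h1A
    obtain ⟨T, hT, hTC⟩ := hnbhd n
    have h1T : (1:L) ∈ interior T := mem_interior_iff_mem_nhds.2 hT
    obtain ⟨W, hWo, h1W, hWs, hWcl⟩ := shrink' (isOpen_interior.inter hA) ⟨h1T, h1A⟩
    refine ⟨W, ⟨hWo, h1W, hWs⟩, hWcl.trans fun x hx => hx.2, fun m hm => ?_⟩
    refine (Set.mul_subset_mul_left ?_).trans (hTC m hm)
    exact (subset_closure.trans hWcl).trans (fun x hx => interior_subset hx.1)
  classical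
  let F : ℕ → {A : Set L // IsOpen A ∧ (1:L) ∈ A ∧ A⁻¹ = A} := fun n =>
    Nat.rec ⟨V₀, hV₀o, h1V₀, hV₀s⟩
      (fun n p => ⟨(step n p.1 p.2.1 p.2.2.1).choose, (step n p.1 p.2.1 p.2.2.1).choose_spec.1⟩) n
  have hFsucc : ∀ n, (F (n+1)).1 = (step n (F n).1 (F n).2.1 (F n).2.2.1).choose := fun n => rfl
  refine ⟨fun n => (F n).1, rfl, fun n => (F n).2.1, fun n => (F n).2.2.1,
    fun n => (F n).2.2.2, ?_, ?_⟩
  · intro n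
    show closure (F (n+1)).1 ⊆ (F n).1
    rw [hFsucc n]
    exact (step n (F n).1 (F n).2.1 (F n).2.2.1).choose_spec.2.1
  · intro n m hm
    show C m * (F (n+1)).1 ⊆ O' m
    rw [hFsucc n]
    exact (step n (F n).1 (F n).2.1 (F n).2.2.1).choose_spec.2.2 m hm

/-- Feeble compactness of a pseudocompact image: a decreasing sequence of open sets all
meeting the image has a common closure point inside the image. -/
private lemma feeble' {X : Type*} [TopologicalSpace X] (hpc : IsPseudocompact X)
    {ι : X → L} (hι : Continuous ι) (W : ℕ → Set L)
    (hWo : ∀ n, IsOpen (W n)) (hWd : ∀ n, W (n+1) ⊆ W n)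
    (hne : ∀ n, (W n ∩ range ι).Nonempty) :
    ∃ s ∈ range ι, ∀ n, s ∈ closure (W n ∩ range ι) := by
  by_contra hcon
  push_neg at hcon
  have hanti : Antitone W := antitone_nat_of_succ_le hWd
  set S : Set L := range ι with hS
  let pt : ℕ → L := fun n => (hne n).choose
  have hpt : ∀ n, pt n ∈ W n ∩ S := fun n => (hne n).choose_spec
  classical
  let es : L → ℕ := fun s => if h : s ∈ S then (hcon s h).choose else 0
  have hes : ∀ s (h : s ∈ S), s ∉ closure (W (es s) ∩ S) := by
    intro s h
    simp only [es, dif_pos h]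
    exact (hcon s h).choose_spec
  have hesW : ∀ s (h : s ∈ S) (m : ℕ), es s ≤ m → s ∉ closure (W m ∩ S) := by
    intro s h m hm hmem
    exact hes s h (closure_mono (inter_subset_inter_left _ (hanti hm)) hmem)
  let nseq : ℕ → ℕ := fun j => Nat.rec 0 (fun _ n => (max (es (pt n)) n) + 1) j
  have hnseq_succ : ∀ j, nseq (j+1) = (max (es (pt (nseq j))) (nseq j)) + 1 := fun j => rfl
  have hnmono : StrictMono nseq := strictMono_nat_of_lt_succ (fun j => by
    rw [hnseq_succ]
    exact Nat.lt_succ_of_le (le_max_right _ _))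
  have hnge : ∀ j, j ≤ nseq j := fun j => hnmono.le_apply
  let ξ : ℕ → L := fun j => pt (nseq j)
  have hξW : ∀ j, ξ j ∈ W (nseq j) ∩ S := fun j => hpt (nseq j)
  have hξnot : ∀ j, ξ j ∉ closure (W (nseq (j+1)) ∩ S) := by
    intro j
    apply hesW _ (hξW j).2
    rw [hnseq_succ]
    exact Nat.le_succ_of_le (le_max_left _ _)
  let Ω : ℕ → Set L := fun j => W (nseq j) \ closure (W (nseq (j+1)) ∩ S)
  have hΩo : ∀ j, IsOpen (Ω j) := fun j => (hWo _).sdiff isClosed_closure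
  have hξΩ : ∀ j, ξ j ∈ Ω j := fun j => ⟨(hξW j).1, hξnot j⟩
  have hφ := fun j => urysohn' (hΩo j) (hξΩ j)
  let φ : ℕ → L → ℝ := fun j => (hφ j).choose
  have hφc : ∀ j, Continuous (φ j) := fun j => (hφ j).choose_spec.1
  have hφ1 : ∀ j, φ j (ξ j) = 1 := fun j => (hφ j).choose_spec.2.1
  have hφ0 : ∀ j z, z ∉ Ω j → φ j z = 0 := fun j => (hφ j).choose_spec.2.2.1
  have key : ∀ z ∈ S, ∀ j k : ℕ, j < k → z ∈ Ω k → z ∉ Ω j := by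
    intro z hz j k hjk hk hj
    have h1 : z ∈ W (nseq (j+1)) := hanti (hnmono.monotone hjk) hk.1
    exact hj.2 (subset_closure ⟨h1, hz⟩)
  let f : X → ℝ := fun y => ∑' (j : ℕ), ((j:ℝ)+1) * φ j (ι y)
  have hterm0 : ∀ (z : L), z ∈ S → ∀ n₀ : ℕ, z ∉ closure (W n₀ ∩ S) →
      ∀ j, n₀ ≤ j → φ j z = 0 := by
    intro z hz n₀ hzn j hj
    by_contra hne0
    have hzΩ : z ∈ Ω j := by
      by_contra h; exact hne0 (hφ0 j z h)
    have : z ∈ W n₀ := hanti (hj.trans (hnge j)) hzΩ.1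
    exact hzn (subset_closure ⟨this, hz⟩)
  have hf : Continuous f := by
    rw [continuous_iff_continuousAt]
    intro y₀
    have hy₀S : ι y₀ ∈ S := mem_range_self y₀
    set n₀ : ℕ := es (ι y₀) with hn₀
    have hy₀not : ι y₀ ∉ closure (W n₀ ∩ S) := hes _ hy₀S
    have hNy : IsOpen (ι ⁻¹' (closure (W n₀ ∩ S))ᶜ) :=
      (isClosed_closure.isOpen_compl).preimage hι
    have hy₀N : y₀ ∈ ι ⁻¹' (closure (W n₀ ∩ S))ᶜ := hy₀not
    have heq : ∀ y ∈ ι ⁻¹' (closure (W n₀ ∩ S))ᶜ,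
        f y = ∑ j ∈ Finset.range n₀, ((j:ℝ)+1) * φ j (ι y) := by
      intro y hy
      apply tsum_eq_sum
      intro j hj
      rw [hterm0 (ι y) (mem_range_self y) n₀ hy j (by simpa using hj)]
      ring
    have hg : Continuous (fun y => ∑ j ∈ Finset.range n₀, ((j:ℝ)+1) * φ j (ι y)) := by
      apply continuous_finset_sum
      intro j _
      exact continuous_const.mul ((hφc j).comp hι)
    apply (hg.continuousAt).congr
    apply Filter.eventuallyEq_of_mem (hNy.mem_nhds hy₀N)
    intro y hy
    exact (heq y hy).symm
  obtain ⟨M, hM⟩ := hpc f hf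
  obtain ⟨j, hj⟩ := exists_nat_gt M
  obtain ⟨yj, hyj⟩ : ξ j ∈ S := (hξW j).2
  have hval : f yj = (j:ℝ) + 1 := by
    have h1 : f yj = ((j:ℝ)+1) * φ j (ι yj) := by
      apply tsum_eq_single
      intro k hk
      have hξS : ξ j ∈ S := (hξW j).2
      have hzk : φ k (ξ j) = 0 := by
        rcases lt_or_gt_of_ne hk with h | h
        · have := key (ξ j) hξS k j h (hξΩ j)
          by_contra hne0; exact hne0 (hφ0 k _ this)
        · by_contra hne0
          have hmem : ξ j ∈ Ω k := by
            by_contra h'; exact hne0 (hφ0 k _ h')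
          exact (key (ξ j) hξS j k h hmem) (hξΩ j)
      rw [hyj, hzk]; ring
    rw [h1, hyj, hφ1 j]; ring
  have hb : (j:ℝ) + 1 ≤ M := by
    have := hM yj
    rwa [hval, abs_of_nonneg (by positivity)] at this
  linarith

end Helpers

section MeasureHelpers

variable {L : Type*} [Group L] [TopologicalSpace L] [IsTopologicalGroup L]
  [LocallyCompactSpace L] [T2Space L] [MeasurableSpace L] [BorelSpace L]

/-- A right-invariant Haar measure. -/
noncomputable abbrev nuRight (L : Type*) [Group L] [TopologicalSpace L] [IsTopologicalGroup L]
  [LocallyCompactSpace L] [T2Space L] [MeasurableSpace L] [BorelSpace L] : Measure L :=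
  (MeasureTheory.Measure.haar (G := L)).inv

private lemma nu_apply (s : Set L) : nuRight L s = Measure.haar s⁻¹ := Measure.inv_apply _ s

private lemma nu_open_pos {U : Set L} (hU : IsOpen U) (hne : U.Nonempty) : 0 < nuRight L U := by
  rw [nu_apply]
  exact hU.inv.measure_pos _ (by simpa using hne)

private lemma nu_compact_lt_top {K : Set L} (hK : IsCompact K) : nuRight L K < ⊤ := by
  rw [nu_apply]
  exact hK.inv.measure_lt_top

private lemma nu_rt (A : Set L) (hA : MeasurableSet A) (h : L) :
    nuRight L ((fun z => z * h) '' A) = nuRight L A := by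
  have him : (fun z => z * h) '' A = (fun z => z * h⁻¹) ⁻¹' A := by
    ext z
    constructor
    · rintro ⟨a, ha, rfl⟩; simpa using ha
    · intro hz; exact ⟨z * h⁻¹, hz, by simp⟩
  rw [him]
  exact measure_preimage_mul_right (nuRight L) h⁻¹ A

private lemma nu_inner {U : Set L} (hU : IsOpen U) {r : ℝ≥0∞} (hr : r < nuRight L U) :
    ∃ K, K ⊆ U ∧ IsCompact K ∧ r < nuRight L K := by
  rw [nu_apply] at hr
  obtain ⟨K, hKU, hKc, hK⟩ :=
    (Measure.Regular.innerRegular (μ := Measure.haar (G := L))) hU.inv r hr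
  refine ⟨K⁻¹, fun x hx => ?_, hKc.inv, ?_⟩
  · have : x⁻¹ ∈ K := by simpa using hx
    simpa using hKU this
  · rw [nu_apply]
    simpa using hK

end MeasureHelpers

section Separation

variable {L : Type*} [Group L] [TopologicalSpace L] [IsTopologicalGroup L]
  [LocallyCompactSpace L] [T2Space L] [MeasurableSpace L] [BorelSpace L]

/-- The key separation lemma: relatively clopen pieces of a pseudocompact subset of a dense
subgroup have disjoint closures in the ambient locally compact group. -/
private lemma sep' {G : Subgroup L} (hdense : Dense (G : Set L))
    {X : Type*} [TopologicalSpace X] (hpc : IsPseudocompact X)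
    {ι : X → L} (hι : Continuous ι)
    {E : Set L} (hE : IsOpen E) (hEcpt : IsCompact (closure E))
    (hEtr : E ∩ (G : Set L) ⊆ range ι)
    {B' : Set L} (hB'S : B' ⊆ range ι) (hB'cl : closure B' ⊆ E)
    (hb : ∀ b ∈ B', b ∉ closure (range ι \ B'))
    (hw : ∀ w ∈ range ι \ B', w ∉ closure B') :
    closure B' ∩ closure (range ι \ B') = ∅ := by
  set S : Set L := range ι with hS
  by_contra hcon
  obtain ⟨x, hxB, hxSB⟩ : ∃ x, x ∈ closure B' ∧ x ∈ closure (S \ B') := by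
    rcases nonempty_iff_ne_empty.2 hcon with ⟨x, hx⟩
    exact ⟨x, hx.1, hx.2⟩
  obtain ⟨K₀, hK₀c, h1K₀, -⟩ := exists_compact_subset isOpen_univ (mem_univ (1:L))
  obtain ⟨V₀, hV₀o, h1V₀, hV₀s, hV₀cl⟩ := shrink' isOpen_interior h1K₀
  have hV₀cpt : IsCompact (closure V₀) :=
    hK₀c.of_isClosed_subset isClosed_closure (hV₀cl.trans interior_subset)
  have hxV₀cpt : IsCompact ((fun z => x * z) '' closure V₀) :=
    hV₀cpt.image (continuous_mul_left x)
  obtain ⟨K₃, hK₃c, hK₃i⟩ := exists_compact_superset hxV₀cpt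
  set E₃ : Set L := interior K₃ with hE₃def
  have hE₃o : IsOpen E₃ := isOpen_interior
  set O₁ : Set L := E \ closure (S \ B') with hO₁def
  set O₂ : Set L := E₃ \ closure B' with hO₂def
  have hO₁o : IsOpen O₁ := hE.sdiff isClosed_closure
  have hO₂o : IsOpen O₂ := hE₃o.sdiff isClosed_closure
  have hB'O₁ : B' ⊆ O₁ := fun b hbB => ⟨hB'cl (subset_closure hbB), hb b hbB⟩
  have hdisj : O₁ ∩ O₂ = ∅ := by
    by_contra hne
    obtain ⟨g, hgG, hgO⟩ := hdense.exists_mem_open (hO₁o.inter hO₂o)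
      (nonempty_iff_ne_empty.2 hne)
    have hgS : g ∈ S := hEtr ⟨hgO.1.1, hgG⟩
    have hgB' : g ∈ B' := by
      by_contra hgB'
      exact hgO.1.2 (subset_closure ⟨hgS, hgB'⟩)
    exact hgO.2.2 (subset_closure hgB')
  have hxO₁ : x ∈ closure O₁ := closure_mono hB'O₁ hxB
  have himg : (fun z => x * z) '' V₀ ⊆ E₃ :=
    (image_mono subset_closure).trans hK₃i
  have hxO₂ : x ∈ closure O₂ := by
    rw [mem_closure_iff]
    intro o ho hxo
    have ho' : IsOpen (o ∩ (fun z => x * z) '' V₀) :=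
      ho.inter ((Homeomorph.mulLeft x).isOpen_image.2 hV₀o)
    have hxo' : x ∈ o ∩ (fun z => x * z) '' V₀ := ⟨hxo, ⟨1, h1V₀, mul_one x⟩⟩
    obtain ⟨w, hwo, hwSB⟩ := mem_closure_iff.1 hxSB _ ho' hxo'
    exact ⟨w, hwo.1, himg hwo.2, hw w hwSB⟩
  -- measure theory setup
  have hνO₁fin : nuRight L O₁ ≠ ⊤ :=
    (lt_of_le_of_lt (measure_mono (fun z hz => subset_closure hz.1)) (nu_compact_lt_top hEcpt)).ne
  have hνO₂fin : nuRight L O₂ ≠ ⊤ :=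
    (lt_of_le_of_lt (measure_mono (fun z hz => interior_subset hz.1)) (nu_compact_lt_top hK₃c)).ne
  have hinner : ∀ (O : Set L), IsOpen O → nuRight L O ≠ ⊤ → ∀ k : ℕ,
      ∃ C, C ⊆ O ∧ IsCompact C ∧ nuRight L O ≤ nuRight L C + ((k:ℝ≥0∞)+1)⁻¹ := by
    intro O hO hfin k
    by_cases hsmall : nuRight L O ≤ ((k:ℝ≥0∞)+1)⁻¹
    · exact ⟨∅, empty_subset _, isCompact_empty,
        le_trans hsmall (by simp)⟩
    · push_neg at hsmall
      have hν0 : nuRight L O ≠ 0 := by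
        intro h0; rw [h0] at hsmall
        exact (not_lt_of_ge zero_le) hsmall
      have hr : nuRight L O - ((k:ℝ≥0∞)+1)⁻¹ < nuRight L O :=
        ENNReal.sub_lt_self hfin hν0 (by simp)
      obtain ⟨C, hCO, hCc, hC⟩ := nu_inner hO hr
      exact ⟨C, hCO, hCc, tsub_le_iff_right.mp hC.le⟩
  classical
  let Op : ℕ → Set L := fun m => if m % 2 = 0 then O₁ else O₂
  have hOpo : ∀ m, IsOpen (Op m) := by
    intro m; by_cases hm : m % 2 = 0
    · rw [show Op m = O₁ from if_pos hm]; exact hO₁o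
    · rw [show Op m = O₂ from if_neg hm]; exact hO₂o
  have hOpeq : ∀ m, Op m = O₁ ∨ Op m = O₂ := by
    intro m; by_cases hm : m % 2 = 0
    · exact Or.inl (if_pos hm)
    · exact Or.inr (if_neg hm)
  have hOpfin : ∀ m, nuRight L (Op m) ≠ ⊤ := by
    intro m; rcases hOpeq m with hm | hm <;> rw [hm]
    exacts [hνO₁fin, hνO₂fin]
  let Cc : ℕ → Set L := fun m => (hinner (Op m) (hOpo m) (hOpfin m) (m/2)).choose
  have hCc : ∀ m, Cc m ⊆ Op m ∧ IsCompact (Cc m) ∧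
      nuRight L (Op m) ≤ nuRight L (Cc m) + (((m/2 : ℕ):ℝ≥0∞)+1)⁻¹ :=
    fun m => (hinner (Op m) (hOpo m) (hOpfin m) (m/2)).choose_spec
  obtain ⟨V, hV0, hVo, hV1, hVs, hVcl, hVC⟩ :=
    chain_exists' V₀ hV₀o h1V₀ hV₀s Cc (fun m => (hCc m).2.1) Op hOpo (fun m => (hCc m).1)
  have hxS : x ∈ closure S := closure_mono hB'S hxB
  set W : ℕ → Set L := fun n => (fun z => x * z) '' V n with hWdef
  have hWo : ∀ n, IsOpen (W n) := fun n => (Homeomorph.mulLeft x).isOpen_image.2 (hVo n)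
  have hWd : ∀ n, W (n+1) ⊆ W n := fun n => image_mono (subset_closure.trans (hVcl n))
  have hWne : ∀ n, (W n ∩ S).Nonempty := by
    intro n
    have hxW : x ∈ W n := ⟨1, hV1 n, mul_one x⟩
    exact mem_closure_iff.1 hxS _ (hWo n) hxW
  obtain ⟨s, hsS, hscl⟩ := feeble' hpc hι W hWo hWd hWne
  have hhcl : ∀ n, x⁻¹ * s ∈ closure (V n) := by
    intro n
    have h1 : s ∈ closure (W n) := closure_mono inter_subset_left (hscl n)
    have h2 : closure (W n) = (fun z => x * z) '' closure (V n) :=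
      ((Homeomorph.mulLeft x).image_closure (V n)).symm
    rw [h2] at h1
    obtain ⟨v, hv, hvs⟩ := h1
    have hveq : v = x⁻¹ * s := by rw [← hvs]; group
    rwa [← hveq]
  set h : L := x⁻¹ * s with hdef
  have hxh : x * h = s := by rw [hdef]; group
  have hhV : ∀ n, h ∈ V n := fun n => hVcl n (hhcl (n+1))
  have hhVinv : ∀ n, h⁻¹ ∈ V n := by
    intro n
    rw [← hVs n]
    simpa using hhV n
  have hbound : ∀ (g : L), (∀ n, g ∈ V (n+1)) → ∀ m,
      nuRight L (Op m \ (fun z => z * g) '' (Op m)) ≤ (((m/2 : ℕ):ℝ≥0∞)+1)⁻¹ := by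
    intro g hg m
    have hCg : (fun z => z * g) '' (Cc m) ⊆ Op m := by
      rintro _ ⟨c, hc, rfl⟩
      exact hVC m m le_rfl (Set.mul_mem_mul hc (hg m))
    have hsub : Op m \ (fun z => z * g) '' (Op m) ⊆ Op m \ (fun z => z * g) '' (Cc m) :=
      diff_subset_diff_right (image_mono (hCc m).1)
    have hcptim : IsCompact ((fun z => z * g) '' (Cc m)) :=
      (hCc m).2.1.image (continuous_mul_right g)
    calc nuRight L (Op m \ (fun z => z * g) '' (Op m))
        ≤ nuRight L (Op m \ (fun z => z * g) '' (Cc m)) := measure_mono hsub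
      _ = nuRight L (Op m) - nuRight L ((fun z => z * g) '' (Cc m)) := by
          apply measure_diff hCg hcptim.isClosed.measurableSet.nullMeasurableSet
          exact (lt_of_le_of_lt (measure_mono hCg) (hOpfin m).lt_top).ne
      _ = nuRight L (Op m) - nuRight L (Cc m) := by
          rw [nu_rt _ (hCc m).2.1.isClosed.measurableSet g]
      _ ≤ (((m/2 : ℕ):ℝ≥0∞)+1)⁻¹ := by
          apply tsub_le_iff_right.mpr
          rw [add_comm]
          exact (hCc m).2.2
  have hzero : ∀ (g : L), (∀ n, g ∈ V (n+1)) → ∀ (O : Set L),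
      (∀ k : ℕ, ∃ m, Op m = O ∧ m / 2 = k) →
      nuRight L (O \ (fun z => z * g) '' O) = 0 := by
    intro g hg O hOidx
    by_contra hne0
    obtain ⟨n, hn⟩ := ENNReal.exists_inv_nat_lt hne0
    obtain ⟨m, hm1, hm2⟩ := hOidx n
    have hbd := hbound g hg m
    rw [hm1, hm2] at hbd
    have hle : ((n:ℝ≥0∞)+1)⁻¹ ≤ ((n:ℕ):ℝ≥0∞)⁻¹ :=
      ENNReal.inv_le_inv.mpr le_self_add
    exact absurd (hbd.trans hle) (not_le.2 hn)
  have hidx₁ : ∀ k : ℕ, ∃ m, Op m = O₁ ∧ m / 2 = k := by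
    intro k; exact ⟨2*k, by simp [Op, Nat.mul_mod_right], by omega⟩
  have hidx₂ : ∀ k : ℕ, ∃ m, Op m = O₂ ∧ m / 2 = k := by
    intro k
    refine ⟨2*k+1, ?_, by omega⟩
    have : (2*k+1) % 2 = 1 := by omega
    simp [Op, this]
  have hnull₁ : nuRight L (O₁ \ (fun z => z * h⁻¹) '' O₁) = 0 :=
    hzero h⁻¹ (fun n => hhVinv (n+1)) O₁ hidx₁
  have hnull₂ : nuRight L (O₂ \ (fun z => z * h⁻¹) '' O₂) = 0 :=
    hzero h⁻¹ (fun n => hhVinv (n+1)) O₂ hidx₂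
  have hclO : ∀ (O : Set L), IsOpen O → x ∈ closure O →
      nuRight L (O \ (fun z => z * h⁻¹) '' O) = 0 → s ∈ closure O := by
    intro O hO hxO hOnull
    rw [mem_closure_iff]
    intro o ho hso
    set V' : Set L := (fun v => x * v * h) ⁻¹' o with hV'def
    have hV'o : IsOpen V' := ho.preimage (by fun_prop)
    have h1V' : (1:L) ∈ V' := by
      show x * 1 * h ∈ o
      rwa [mul_one, hxh]
    have hltxo : IsOpen ((fun z => x * z) '' V') := (Homeomorph.mulLeft x).isOpen_image.2 hV'o
    have hxmem : x ∈ (fun z => x * z) '' V' := ⟨1, h1V', mul_one x⟩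
    have hpos : 0 < nuRight L ((fun z => x * z) '' V' ∩ O) :=
      nu_open_pos (hltxo.inter hO) (mem_closure_iff.1 hxO _ hltxo hxmem)
    have hcover : (fun z => x * z) '' V' ∩ O ⊆
        ((fun z => x * z) '' V' ∩ (fun z => z * h⁻¹) '' O) ∪
          (O \ (fun z => z * h⁻¹) '' O) := by
      intro z hz
      by_cases hzO : z ∈ (fun z => z * h⁻¹) '' O
      · exact Or.inl ⟨hz.1, hzO⟩
      · exact Or.inr ⟨hz.2, hzO⟩
    have hpos2 : nuRight L ((fun z => x * z) '' V' ∩ (fun z => z * h⁻¹) '' O) ≠ 0 := by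
      intro hzero2
      have hle : nuRight L ((fun z => x * z) '' V' ∩ O) = 0 := by
        apply le_antisymm _ zero_le
        calc nuRight L ((fun z => x * z) '' V' ∩ O)
            ≤ nuRight L (((fun z => x * z) '' V' ∩ (fun z => z * h⁻¹) '' O) ∪
              (O \ (fun z => z * h⁻¹) '' O)) := measure_mono hcover
          _ ≤ nuRight L ((fun z => x * z) '' V' ∩ (fun z => z * h⁻¹) '' O) +
              nuRight L (O \ (fun z => z * h⁻¹) '' O) := measure_union_le _ _
          _ = 0 := by rw [hzero2, hOnull, add_zero]
      rw [hle] at hpos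
      exact lt_irrefl _ hpos
    have hmeas : MeasurableSet ((fun z => x * z) '' V' ∩ (fun z => z * h⁻¹) '' O) := by
      apply IsOpen.measurableSet
      exact hltxo.inter ((Homeomorph.mulRight h⁻¹).isOpen_image.2 hO)
    have himg2 : (fun z => z * h) ''
        (((fun z => x * z) '' V') ∩ ((fun z => z * h⁻¹) '' O)) ⊆ o ∩ O := by
      rintro _ ⟨z, ⟨⟨v, hv, rfl⟩, hzO⟩, rfl⟩
      refine ⟨hv, ?_⟩
      obtain ⟨w, hwO, hwz⟩ := hzO
      rw [← hwz]
      simpa using hwO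
    have hposoO : nuRight L (o ∩ O) ≠ 0 := by
      intro h0
      apply hpos2
      rw [← nu_rt _ hmeas h]
      exact le_antisymm (le_trans (measure_mono himg2) (le_of_eq h0)) zero_le
    exact nonempty_of_measure_ne_zero hposoO
  have hsO₁cl : s ∈ closure O₁ := hclO O₁ hO₁o hxO₁ hnull₁
  have hsO₂cl : s ∈ closure O₂ := hclO O₂ hO₂o hxO₂ hnull₂
  by_cases hsB : s ∈ B'
  · have hsO₁ : s ∈ O₁ := ⟨hB'cl (subset_closure hsB), hb s hsB⟩
    obtain ⟨z, hz⟩ := mem_closure_iff.1 hsO₂cl O₁ hO₁o hsO₁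
    exact absurd hz (by rw [hdisj]; exact notMem_empty z)
  · have hsSB : s ∈ S \ B' := ⟨hsS, hsB⟩
    have hsE₃ : s ∈ E₃ := by
      rw [← hxh]
      exact himg ⟨h, by rw [← hV0]; exact hhV 0, rfl⟩
    have hsO₂ : s ∈ O₂ := ⟨hsE₃, hw s hsSB⟩
    obtain ⟨z, hz⟩ := mem_closure_iff.1 hsO₁cl O₂ hO₂o hsO₂
    have : z ∈ O₁ ∩ O₂ := ⟨hz.2, hz.1⟩
    exact absurd this (by rw [hdisj]; exact notMem_empty z)

end Separation

/-- A locally pseudocompact group `G`, dense in its locally compact Hausdorff completion `L`,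
is zero-dimensional iff `L` is zero-dimensional. -/
theorem zeroDimensional_iff_completion_zeroDimensional
    {L : Type u} [Group L] [TopologicalSpace L] [IsTopologicalGroup L]
    [LocallyCompactSpace L] [T2Space L]
    (G : Subgroup L) (hdense : Dense (G : Set L))
    (hlp : LocallyPseudocompactGrp ↥G) :
    ZeroDimensional ↥G ↔ ZeroDimensional L := by
  constructor
  · -- hard direction
    intro hG
    obtain ⟨U, hU, hpc⟩ := hlp
    letI : MeasurableSpace L := borel L
    haveI : BorelSpace L := ⟨rfl⟩
    -- the clopen-neighborhoods-of-1 construction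
    have h1 : ∀ O : Set L, IsOpen O → (1:L) ∈ O → ∃ T : Set L, IsClopen T ∧ 1 ∈ T ∧ T ⊆ O := by
      intro O hO h1O
      set ι : ↥(closure U) → L := fun y => ((y : ↥G) : L) with hιdef
      have hιc : Continuous ι := continuous_subtype_val.comp continuous_subtype_val
      set S : Set L := range ι with hSdef
      have hSG : S ⊆ (G : Set L) := by
        rintro _ ⟨y, rfl⟩
        exact ((y : ↥G)).2
      -- W₁ : open trace neighborhood
      obtain ⟨t, ht, htU⟩ : ∃ t ∈ 𝓝 ((1:L)), (Subtype.val : ↥G → L) ⁻¹' t ⊆ U := by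
        rw [nhds_induced] at hU
        obtain ⟨t, ht, htU⟩ := hU
        exact ⟨t, ht, htU⟩
      set W₁ : Set L := interior t with hW₁def
      have hW₁o : IsOpen W₁ := isOpen_interior
      have h1W₁ : (1:L) ∈ W₁ := mem_interior_iff_mem_nhds.2 ht
      have hW₁tr : W₁ ∩ (G : Set L) ⊆ S := by
        rintro w ⟨hwW, hwG⟩
        have hwt : w ∈ t := interior_subset hwW
        have hU' : (⟨w, hwG⟩ : ↥G) ∈ U := htU hwt
        exact ⟨⟨⟨w, hwG⟩, subset_closure hU'⟩, rfl⟩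
      -- E and E₂
      obtain ⟨KE, hKEc, h1KE, hKEO⟩ := exists_compact_subset (hO.inter hW₁o) ⟨h1O, h1W₁⟩
      set E : Set L := interior KE with hEdef
      have hEo : IsOpen E := isOpen_interior
      have hEcpt : IsCompact (closure E) :=
        hKEc.of_isClosed_subset isClosed_closure (closure_minimal interior_subset hKEc.isClosed)
      have hEOW : E ⊆ O ∩ W₁ := interior_subset.trans hKEO
      obtain ⟨K₂, hK₂c, h1K₂, hK₂E⟩ := exists_compact_subset hEo h1KE
      set E₂ : Set L := interior K₂ with hE₂def
      have hE₂cl : closure E₂ ⊆ E := (closure_minimal interior_subset hK₂c.isClosed).trans hK₂E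
      -- B₀ : clopen in G inside E₂ and inside U
      have h1U : (1 : ↥G) ∈ interior U := mem_interior_iff_mem_nhds.2 hU
      have hu₀o : IsOpen ((Subtype.val : ↥G → L) ⁻¹' E₂ ∩ interior U) :=
        (isOpen_interior.preimage continuous_subtype_val).inter isOpen_interior
      have h1u₀ : (1 : ↥G) ∈ (Subtype.val : ↥G → L) ⁻¹' E₂ ∩ interior U := ⟨h1K₂, h1U⟩
      obtain ⟨B₀, hB₀cl, h1B₀, hB₀u₀⟩ := hG.exists_subset_of_mem_open h1u₀ hu₀o
      set B' : Set L := (Subtype.val : ↥G → L) '' B₀ with hB'def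
      have h1B' : (1:L) ∈ B' := ⟨1, h1B₀, rfl⟩
      have hB'S : B' ⊆ S := by
        rintro _ ⟨g, hg, rfl⟩
        exact ⟨⟨g, subset_closure (interior_subset (hB₀u₀ hg).2)⟩, rfl⟩
      have hB'E₂ : B' ⊆ E₂ := by
        rintro _ ⟨g, hg, rfl⟩
        exact (hB₀u₀ hg).1
      have hB'cl : closure B' ⊆ E := (closure_mono hB'E₂).trans hE₂cl
      have hEtr : E ∩ (G : Set L) ⊆ S := fun z hz => hW₁tr ⟨(hEOW hz.1).2, hz.2⟩
      -- clopen trace facts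
      obtain ⟨OB, hOBo, hOBeq⟩ := isOpen_induced_iff.mp hB₀cl.2
      obtain ⟨OB', hOB'o, hOB'eq⟩ := isOpen_induced_iff.mp hB₀cl.1.isOpen_compl
      have hb : ∀ b ∈ B', b ∉ closure (S \ B') := by
        rintro _ ⟨g, hg, rfl⟩ hcl
        have hgOB : (g : L) ∈ OB := by
          rw [← hOBeq] at hg; exact hg
        obtain ⟨z, hzOB, hzS, hzB'⟩ := mem_closure_iff.1 hcl OB hOBo hgOB
        obtain ⟨y, rfl⟩ := hzS
        have : (y : ↥G) ∈ (Subtype.val : ↥G → L) ⁻¹' OB := hzOB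
        rw [hOBeq] at this
        exact hzB' ⟨(y : ↥G), this, rfl⟩
      have hw : ∀ w ∈ S \ B', w ∉ closure B' := by
        rintro w ⟨hwS, hwB'⟩ hcl
        obtain ⟨y, rfl⟩ := hwS
        have hyB₀ : (y : ↥G) ∉ B₀ := by
          intro hy
          exact hwB' ⟨(y : ↥G), hy, rfl⟩
        have hyOB' : (ι y) ∈ OB' := by
          have : (y : ↥G) ∈ (Subtype.val : ↥G → L) ⁻¹' OB' := by
            rw [hOB'eq]; exact hyB₀
          exact this
        obtain ⟨z, hzOB', hzB'⟩ := mem_closure_iff.1 hcl OB' hOB'o hyOB'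
        obtain ⟨g, hg, rfl⟩ := hzB'
        have : g ∈ (Subtype.val : ↥G → L) ⁻¹' OB' := hzOB'
        rw [hOB'eq] at this
        exact this hg
      -- the separation
      have hsep := sep' hdense hpc hιc hEo hEcpt hEtr hB'S hB'cl hb hw
      -- T := closure B' is the desired clopen set
      refine ⟨closure B', ⟨isClosed_closure, ?_⟩, subset_closure h1B', ?_⟩
      · rw [isOpen_iff_mem_nhds]
        intro z hz
        have hzE : z ∈ E := hB'cl hz
        have hznot : z ∉ closure (S \ B') := by
          intro hcl
          have : z ∈ closure B' ∩ closure (S \ B') := ⟨hz, hcl⟩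
          rw [hsep] at this
          exact this
        have hO₁o : IsOpen (E \ closure (S \ B')) := hEo.sdiff isClosed_closure
        apply Filter.mem_of_superset (hO₁o.mem_nhds ⟨hzE, hznot⟩)
        intro z' hz'
        rw [mem_closure_iff]
        intro o ho hz'o
        obtain ⟨g, hgG, hgo, hgO₁⟩ := hdense.exists_mem_open (ho.inter hO₁o)
          ⟨z', hz'o, hz'⟩
        have hgS : g ∈ S := hEtr ⟨hgO₁.1, hgG⟩
        have hgB' : g ∈ B' := by
          by_contra hgB'
          exact hgO₁.2 (subset_closure ⟨hgS, hgB'⟩)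
        exact ⟨g, hgo, hgB'⟩
      · exact (closure_mono hB'E₂).trans (hE₂cl.trans (fun z hz => (hEOW hz).1))
    -- build the basis
    apply TopologicalSpace.isTopologicalBasis_of_isOpen_of_nhds (fun u hu => hu.isOpen)
    intro x₀ O₀ hx₀ hO₀
    have hO' : IsOpen ((fun z => x₀ * z) ⁻¹' O₀) := hO₀.preimage (continuous_mul_left x₀)
    have h1O' : (1:L) ∈ (fun z => x₀ * z) ⁻¹' O₀ := by
      show x₀ * 1 ∈ O₀
      rwa [mul_one]
    obtain ⟨T, hT, h1T, hTO⟩ := h1 _ hO' h1O'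
    refine ⟨(fun z => x₀⁻¹ * z) ⁻¹' T, hT.preimage (continuous_mul_left x₀⁻¹), ?_, ?_⟩
    · show x₀⁻¹ * x₀ ∈ T
      rwa [inv_mul_cancel]
    · intro z hz
      have : x₀ * (x₀⁻¹ * z) ∈ O₀ := hTO hz
      rwa [← mul_assoc, mul_inv_cancel, one_mul] at this
  · -- easy direction
    intro hL
    apply TopologicalSpace.isTopologicalBasis_of_isOpen_of_nhds (fun u hu => hu.isOpen)
    intro a u hau hu
    obtain ⟨t, ht, hval⟩ := isOpen_induced_iff.mp hu
    have hat : (a : L) ∈ t := by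
      rw [← hval] at hau; exact hau
    obtain ⟨v, hv, hav, hvt⟩ := hL.exists_subset_of_mem_open hat ht
    refine ⟨(Subtype.val : ↥G → L) ⁻¹' v, hv.preimage continuous_subtype_val, hav, ?_⟩
    intro z hz
    rw [← hval]
    exact hvt hz
end

section
/- Let G be a topological group and D a dense subgroup of G. If D (with the subspace topology) is locally connected, then G is locally connected. -/
open Set Topology

universe u

/-- If `D` is a dense subgroup of a topological group `G` and `D` (with the subspace topology)
is locally connected, then `G` is locally connected. -/
theorem locallyConnected_of_dense_subgroup
    {G : Type u} [Group G] [TopologicalSpace G] [IsTopologicalGroup G] [T2Space G]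
    (D : Subgroup G) (hdense : Dense (D : Set G))
    (hlc : LocallyConnectedSpace ↥D) :
    LocallyConnectedSpace G := by
  rw [locallyConnectedSpace_iff_connected_subsets]
  -- First, prove the property at the identity `1`.
  have key : ∀ U ∈ 𝓝 (1 : G), ∃ V ∈ 𝓝 (1 : G), IsPreconnected V ∧ V ⊆ U := by
    intro U hU
    -- topological groups are regular
    obtain ⟨W, hW, hWc, hWU⟩ := exists_mem_nhds_isClosed_subset hU
    obtain ⟨W', hW'W, hW'o, h1W'⟩ := mem_nhds_iff.mp hW
    have h1D : (1 : G) ∈ D := D.one_mem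
    set e : ↥D := ⟨1, h1D⟩
    -- the preimage of W' in D is a nbhd of e
    have hWD : ((↑) ⁻¹' W' : Set ↥D) ∈ 𝓝 e := by
      rw [mem_nhds_subtype]
      exact ⟨W', hW'o.mem_nhds h1W', le_refl _⟩
    obtain ⟨K, hK, hKc, hKW⟩ := locallyConnectedSpace_iff_connected_subsets.mp hlc e _ hWD
    -- closure in G of the image of K
    refine ⟨closure ((↑) '' K : Set G), ?_, ?_, ?_⟩
    · -- it is a nbhd of 1
      rw [mem_nhds_subtype] at hK
      obtain ⟨V', hV', hV'K⟩ := hK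
      obtain ⟨V'', hV''V', hV''o, h1V''⟩ := mem_nhds_iff.mp hV'
      have hsub : V'' ⊆ closure ((↑) '' K : Set G) := by
        have h1 : V'' ∩ (D : Set G) ⊆ ((↑) '' K : Set G) := by
          rintro x ⟨hxV, hxD⟩
          exact ⟨⟨x, hxD⟩, hV'K (hV''V' hxV), rfl⟩
        calc V'' = V'' ∩ closure (D : Set G) := by rw [hdense.closure_eq, inter_univ]
          _ ⊆ closure (V'' ∩ (D : Set G)) := hV''o.inter_closure
          _ ⊆ closure ((↑) '' K : Set G) := closure_mono h1
      exact Filter.mem_of_superset (hV''o.mem_nhds h1V'') hsub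
    · exact (hKc.image _ continuous_subtype_val.continuousOn).closure
    · have h2 : ((↑) '' K : Set G) ⊆ W' := by
        rintro _ ⟨k, hk, rfl⟩
        exact hKW hk
      calc closure ((↑) '' K : Set G) ⊆ closure W' := closure_mono h2
        _ ⊆ W := hWc.closure_subset_iff.mpr hW'W
        _ ⊆ U := hWU
  -- transfer to arbitrary points via translation
  intro x U hU
  have hU' : (fun y => x * y) ⁻¹' U ∈ 𝓝 (1 : G) := by
    have := (Homeomorph.mulLeft x).continuous.continuousAt (x := (1 : G))
    exact this.preimage_mem_nhds (by simpa using hU)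
  obtain ⟨V, hV, hVc, hVU⟩ := key _ hU'
  refine ⟨(fun y => x * y) '' V, ?_, hVc.image _ (continuous_const.mul continuous_id).continuousOn,
    ?_⟩
  · have := Filter.image_mem_map (m := fun y => x * y) hV
    rw [← Homeomorph.coe_mulLeft, (Homeomorph.mulLeft x).map_nhds_eq] at this
    simpa using this
  · rintro _ ⟨v, hv, rfl⟩
    exact hVU hv
end

section
/- Let L be a locally compact Hausdorff topological group and G a dense subgroup of L (so G is a locally precompact group). Then G is precompactly generated (algebraically generated by a precompact subset of G) if and only if L is compactly generated (algebraically generated by a compact subset of L). -/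
open Set Topology Pointwise

universe u

/-- A subset `X` of a topological group `G` is precompact if for every neighborhood `U` of
the identity there is a finite `S ⊆ X` with `X ⊆ (S*U) ∩ (U*S)`. -/
def IsPrecompactSet {G : Type u} [Group G] [TopologicalSpace G] (X : Set G) : Prop :=
  ∀ U ∈ nhds (1 : G), ∃ S : Set G, S.Finite ∧ S ⊆ X ∧ X ⊆ (S * U) ∩ (U * S)

/-- A topological group is precompactly generated if it is algebraically generated by a
precompact subset. -/
def PrecompactlyGenerated (G : Type u) [Group G] [TopologicalSpace G] : Prop :=
  ∃ X : Set G, IsPrecompactSet X ∧ Subgroup.closure X = ⊤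

private lemma exists_open_symm_nhds {L : Type u} [Group L] [TopologicalSpace L]
    [IsTopologicalGroup L] {U : Set L} (hU : U ∈ 𝓝 1) :
    ∃ V : Set L, IsOpen V ∧ (1:L) ∈ V ∧ V⁻¹ * V ⊆ U ∧ V * V⁻¹ ⊆ U := by
  obtain ⟨W, hWo, hW1, hWU⟩ := exists_open_nhds_one_mul_subset hU
  have hsub : W ∩ W⁻¹ ⊆ W := inter_subset_left
  have hsub' : (W ∩ W⁻¹)⁻¹ ⊆ W := by
    intro a ha
    rw [Set.mem_inv] at ha
    simpa using ha.2
  exact ⟨W ∩ W⁻¹, hWo.inter hWo.inv, ⟨hW1, by simpa using hW1⟩,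
    (Set.mul_subset_mul hsub' hsub).trans hWU,
    (Set.mul_subset_mul hsub hsub').trans hWU⟩

private lemma precompact_of_subset_compact {L : Type u} [Group L] [TopologicalSpace L]
    [IsTopologicalGroup L] {X C : Set L} (hXC : X ⊆ C) (hC : IsCompact C) :
    ∀ U ∈ 𝓝 (1 : L), ∃ S : Set L, S.Finite ∧ S ⊆ X ∧ X ⊆ (S * U) ∩ (U * S) := by
  intro U hU
  classical
  obtain ⟨V, hVo, hV1, hVl, hVr⟩ := exists_open_symm_nhds hU
  -- left cover
  obtain ⟨t₁, -, hcov₁⟩ := hC.elim_nhds_subcover (fun y => y • V) (fun y _ =>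
    (hVo.smul y).mem_nhds ⟨1, hV1, mul_one y⟩)
  -- right cover
  obtain ⟨t₂, -, hcov₂⟩ := hC.elim_nhds_subcover (fun y => MulOpposite.op y • V) (fun y _ =>
    (hVo.smul (MulOpposite.op y)).mem_nhds ⟨1, hV1, one_mul y⟩)
  have pick : ∀ W : Set L, ∃ s : L, (X ∩ W).Nonempty → s ∈ X ∩ W := by
    intro W
    by_cases h : (X ∩ W).Nonempty
    · exact ⟨h.choose, fun _ => h.choose_spec⟩
    · exact ⟨1, fun h' => absurd h' h⟩
  choose f hf using pick
  set S₁ : Set L := f '' ((fun y => y • V) '' {y ∈ (t₁ : Set L) | (X ∩ y • V).Nonempty})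
  set S₂ : Set L := f '' ((fun y => MulOpposite.op y • V) ''
    {y ∈ (t₂ : Set L) | (X ∩ MulOpposite.op y • V).Nonempty})
  refine ⟨S₁ ∪ S₂, ?_, ?_, fun x hx => ⟨?_, ?_⟩⟩
  · exact (((t₁.finite_toSet.subset (sep_subset _ _)).image _).image f).union
      (((t₂.finite_toSet.subset (sep_subset _ _)).image _).image f)
  · rintro s (⟨W, ⟨y, hy, rfl⟩, rfl⟩ | ⟨W, ⟨y, hy, rfl⟩, rfl⟩)
    · exact (hf _ hy.2).1
    · exact (hf _ hy.2).1
  · -- x ∈ (S₁ ∪ S₂) * U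
    obtain ⟨y, hy, hxy⟩ := Set.mem_iUnion₂.1 (hcov₁ (hXC hx))
    have hne : (X ∩ y • V).Nonempty := ⟨x, hx, hxy⟩
    have hs := hf (y • V) hne
    set s := f (y • V)
    have hsS : s ∈ S₁ ∪ S₂ := Or.inl ⟨y • V, ⟨y, ⟨hy, hne⟩, rfl⟩, rfl⟩
    obtain ⟨v, hv, rfl⟩ := hxy
    obtain ⟨v', hv', hs'⟩ := hs.2
    have : s⁻¹ * (y • v) ∈ U := by
      have : s⁻¹ * (y • v) = v'⁻¹ * v := by
        rw [← hs']; simp [smul_eq_mul, mul_assoc]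
      rw [this]
      exact hVl (Set.mul_mem_mul (Set.inv_mem_inv.2 hv') hv)
    exact ⟨s, hsS, s⁻¹ * (y • v), this, by group⟩
  · -- x ∈ U * (S₁ ∪ S₂)
    obtain ⟨y, hy, hxy⟩ := Set.mem_iUnion₂.1 (hcov₂ (hXC hx))
    have hne : (X ∩ MulOpposite.op y • V).Nonempty := ⟨x, hx, hxy⟩
    have hs := hf (MulOpposite.op y • V) hne
    set s := f (MulOpposite.op y • V)
    have hsS : s ∈ S₁ ∪ S₂ := Or.inr ⟨MulOpposite.op y • V, ⟨y, ⟨hy, hne⟩, rfl⟩, rfl⟩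
    obtain ⟨v, hv, rfl⟩ := hxy
    obtain ⟨v', hv', hs'⟩ := hs.2
    have key : (MulOpposite.op y • v) * s⁻¹ ∈ U := by
      have : (MulOpposite.op y • v) * s⁻¹ = v * v'⁻¹ := by
        rw [← hs']; simp [MulOpposite.smul_eq_mul_unop, mul_assoc]
      rw [this]
      exact hVr (Set.mul_mem_mul hv (Set.inv_mem_inv.2 hv'))
    exact ⟨(MulOpposite.op y • v) * s⁻¹, key, s, hsS, by group⟩

/-- A locally precompact group `G`, dense in its locally compact Hausdorff completion `L`,
is precompactly generated iff `L` is compactly generated (algebraically generated by a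
compact subset). -/
theorem precompactlyGenerated_iff_completion_compactlyGenerated
    {L : Type u} [Group L] [TopologicalSpace L] [IsTopologicalGroup L]
    [LocallyCompactSpace L] [T2Space L]
    (G : Subgroup L) (hdense : Dense (G : Set L)) :
    PrecompactlyGenerated ↥G ↔ ∃ K : Set L, IsCompact K ∧ Subgroup.closure K = ⊤ := by
  constructor
  · rintro ⟨X', hpc, hgen⟩
    obtain ⟨V, hVc, hVn⟩ := exists_compact_mem_nhds (1 : L)
    have hU : (Subtype.val ⁻¹' V : Set ↥G) ∈ 𝓝 1 := by
      rw [nhds_subtype]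
      exact Filter.preimage_mem_comap (by simpa using hVn)
    obtain ⟨S, hSfin, hSsub, hScov⟩ := hpc _ hU
    set X : Set L := Subtype.val '' X' with hXdef
    have hXsub : X ⊆ (Subtype.val '' S) * V := by
      rintro x ⟨x', hx', rfl⟩
      obtain ⟨s, hs, u, hu, rfl⟩ := (hScov hx').1
      exact Set.mul_mem_mul (mem_image_of_mem _ hs) hu
    have hSV : IsCompact ((Subtype.val '' S) * V) := ((hSfin.image _).isCompact).mul hVc
    have hXcl : IsCompact (closure X) :=
      hSV.of_isClosed_subset isClosed_closure (closure_minimal hXsub hSV.isClosed)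
    refine ⟨closure X ∪ V, hXcl.union hVc, ?_⟩
    have hopen : IsOpen (Subgroup.closure (closure X ∪ V) : Set L) :=
      Subgroup.isOpen_of_mem_nhds _ (Filter.mem_of_superset hVn
        (subset_union_right.trans Subgroup.subset_closure))
    have hGsub : (G : Set L) ⊆ ↑(Subgroup.closure (closure X ∪ V)) := by
      intro g hg
      have h1 : (⟨g, hg⟩ : ↥G) ∈ Subgroup.closure X' := hgen ▸ Subgroup.mem_top _
      have h2 : g ∈ Subgroup.closure X := by
        have h3 := Subgroup.mem_map_of_mem G.subtype h1
        rw [MonoidHom.map_closure] at h3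
        simpa [hXdef, Subgroup.coe_subtype] using h3
      exact Subgroup.closure_mono (subset_closure.trans subset_union_left) h2
    have hclosed : IsClosed (Subgroup.closure (closure X ∪ V) : Set L) :=
      Subgroup.isClosed_of_isOpen _ hopen
    rw [← Subgroup.coe_eq_univ]
    have h4 := closure_minimal hGsub hclosed
    rw [hdense.closure_eq] at h4
    exact univ_subset_iff.1 h4
  · rintro ⟨K, hKc, hKgen⟩
    obtain ⟨C, hCc, hCn⟩ := exists_compact_mem_nhds (1 : L)
    set Q : Set L := (K ∪ K⁻¹) ∪ (C ∪ C⁻¹) with hQdef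
    have hQc : IsCompact Q := (hKc.union hKc.inv).union (hCc.union hCc.inv)
    have hQs : Q⁻¹ = Q := by
      ext x
      simp only [hQdef, Set.mem_inv, Set.mem_union]
      constructor <;> (rintro ((h|h)|(h|h)) <;> simp_all [Set.mem_inv])
    have hQn : Q ∈ 𝓝 (1 : L) :=
      Filter.mem_of_superset hCn ((subset_union_left).trans subset_union_right)
    have h1Q : (1:L) ∈ Q := mem_of_mem_nhds hQn
    have hQ3 : IsCompact (Q * Q * Q) := (hQc.mul hQc).mul hQc
    set X' : Set ↥G := Subtype.val ⁻¹' (Q * Q * Q) with hX'def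
    have hXQ : (Subtype.val '' X' : Set L) ⊆ Q * Q * Q := Set.image_preimage_subset _ _
    refine ⟨X', ?_, ?_⟩
    · -- precompactness
      intro U hU
      rw [nhds_subtype, Filter.mem_comap] at hU
      obtain ⟨U', hU'n, hU'sub⟩ := hU
      obtain ⟨S, hSfin, hSsub, hScov⟩ :=
        precompact_of_subset_compact hXQ hQ3 U' (by simpa using hU'n)
      have hSG : ∀ s ∈ S, s ∈ G := fun s hs => by
        obtain ⟨s', -, rfl⟩ := hSsub hs; exact s'.2
      set Sg : Set ↥G := Subtype.val ⁻¹' S with hSgdef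
      refine ⟨Sg, hSfin.preimage (Subtype.val_injective.injOn), ?_, fun x hx => ⟨?_, ?_⟩⟩
      · intro s hs
        obtain ⟨x', hx', hx'e⟩ := hSsub hs
        exact Subtype.val_injective hx'e ▸ hx'
      · obtain ⟨s, hs, u, hu, he⟩ := (hScov (mem_image_of_mem _ hx)).1
        have huG : u ∈ G := by
          have : u = s⁻¹ * (x : L) := by rw [← he]; group
          rw [this]; exact mul_mem (inv_mem (hSG s hs)) x.2
        exact ⟨⟨s, hSG s hs⟩, hs, ⟨u, huG⟩, hU'sub hu, Subtype.ext he⟩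
      · obtain ⟨u, hu, s, hs, he⟩ := (hScov (mem_image_of_mem _ hx)).2
        have huG : u ∈ G := by
          have : u = (x : L) * s⁻¹ := by rw [← he]; group
          rw [this]; exact mul_mem x.2 (inv_mem (hSG s hs))
        exact ⟨⟨u, huG⟩, hU'sub hu, ⟨s, hSG s hs⟩, hs, Subtype.ext he⟩
    · -- generation
      have hmain : ∀ (l : List L), (∀ y ∈ l, y ∈ Q) → ∀ g : ↥G, (g : L) ∈ l.prod • Q →
          (g : L) ∈ Subgroup.closure ((Subtype.val '' X') : Set L) := by
        intro l
        induction l using List.reverseRecOn with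
        | nil =>
          intro _ g hg
          have hgQ : (g : L) ∈ Q := by simpa using hg
          refine Subgroup.subset_closure ⟨g, ?_, rfl⟩
          show (g : L) ∈ Q * Q * Q
          simpa using Set.mul_mem_mul (Set.mul_mem_mul hgQ h1Q) h1Q
        | append_singleton l q ih =>
          intro hmem g hg
          obtain ⟨u, hu, hgu⟩ := hg
          have hint : (1:L) ∈ interior Q := mem_interior_iff_mem_nhds.2 hQn
          have hio : IsOpen (l.prod • interior Q) := isOpen_interior.smul _
          have hine : (l.prod • interior Q).Nonempty := ⟨l.prod, 1, hint, mul_one _⟩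
          obtain ⟨h, hhG, hh⟩ := hdense.exists_mem_open hio hine
          have hhQ : h ∈ l.prod • Q := Set.smul_set_mono interior_subset hh
          have ihh := ih (fun y hy => hmem y (List.mem_append_left _ hy)) ⟨h, hhG⟩ hhQ
          obtain ⟨v, hv, hvh⟩ := hh
          have hq : q ∈ Q := hmem q (by simp)
          have hvQ : v⁻¹ ∈ Q := by
            rw [← hQs]; exact Set.inv_mem_inv.2 (interior_subset hv)
          have hstep : h⁻¹ * (g : L) ∈ Q * Q * Q := by
            have he : h⁻¹ * (g : L) = v⁻¹ * q * u := by
              rw [← hvh, ← hgu]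
              simp only [List.prod_append, List.prod_cons, List.prod_nil, smul_eq_mul]
              group
            rw [he]
            exact Set.mul_mem_mul (Set.mul_mem_mul hvQ hq) hu
          have hstepG : h⁻¹ * (g : L) ∈ G := mul_mem (inv_mem hhG) g.2
          have hstepM : h⁻¹ * (g : L) ∈ Subgroup.closure ((Subtype.val '' X') : Set L) :=
            Subgroup.subset_closure ⟨⟨h⁻¹ * (g : L), hstepG⟩, hstep, rfl⟩
          have := mul_mem ihh hstepM
          rwa [mul_inv_cancel_left] at this
      rw [Subgroup.eq_top_iff']
      intro g
      have hgQ : (g : L) ∈ Subgroup.closure Q := by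
        have hle : Subgroup.closure K ≤ Subgroup.closure Q :=
          Subgroup.closure_mono (subset_union_left.trans subset_union_left)
        exact hle (hKgen ▸ Subgroup.mem_top _)
      rw [← Subgroup.mem_toSubmonoid, Subgroup.closure_toSubmonoid] at hgQ
      obtain ⟨lst, hl, hlp⟩ := Submonoid.exists_list_of_mem_closure hgQ
      have hl' : ∀ y ∈ lst, y ∈ Q := fun y hy => by
        rcases hl y hy with h | h
        · exact h
        · exact hQs ▸ h
      have hmem := hmain lst hl' g (by rw [hlp]; exact ⟨1, h1Q, mul_one _⟩)
      rw [← Subgroup.mem_map_iff_mem G.subtype_injective, MonoidHom.map_closure]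
      simpa [Subgroup.coe_subtype] using hmem
end

section
/- Let E be a divisible abelian group, λ an infinite cardinal with |E| ≤ 2^λ, and p a prime number. Then there exists a group homomorphism φ : ℤ_p^{ω₁ × λ} → E (where ℤ_p^{ω₁ × λ} is the product of copies of the p-adic integers indexed by ω₁ × λ, carrying the product topology) such that: (a) for every x ∈ E, the fiber φ⁻¹(x) is Gδ-dense in ℤ_p^{ω₁ × λ}; (b) for every abelian topological group C and every group homomorphism ψ : C → E, the pullback {(z, c) ∈ ℤ_p^{ω₁ × λ} × C : φ(z) = ψ(c)} is Gδ-dense in the product space ℤ_p^{ω₁ × λ} × C. -/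
open Set Topology

universe u
universe v

/-- A subset is Gδ-dense if it meets every nonempty Gδ-set. -/
def GdeltaDense {X : Type u} [TopologicalSpace X] (S : Set X) : Prop :=
  ∀ A : Set X, IsGδ A → A.Nonempty → (S ∩ A).Nonempty

/-- In a product space, a Gδ set containing a point contains every point agreeing with it on a
suitable countable set of coordinates. -/
lemma gdelta_pi_aux {β : Type u} {X : Type v} [TopologicalSpace X] {A : Set (β → X)}
    (hA : IsGδ A) {z₀ : β → X} (hz : z₀ ∈ A) :
    ∃ S : Set β, S.Countable ∧ ∀ z : β → X, (∀ i ∈ S, z i = z₀ i) → z ∈ A := by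
  obtain ⟨T, hTopen, hTc, rfl⟩ := hA
  haveI := hTc.to_subtype
  have hmem : ∀ t : T, z₀ ∈ (t : Set (β → X)) := fun t => hz t t.2
  choose F u hFu hsub using fun t : T =>
    isOpen_pi_iff.mp (hTopen t t.2) z₀ (hmem t)
  refine ⟨⋃ t : T, (F t : Set β), countable_iUnion (fun t => (F t).countable_toSet), ?_⟩
  intro z hzS
  rw [mem_sInter]
  intro t ht
  refine hsub ⟨t, ht⟩ ?_
  intro a ha
  rw [hzS a (mem_iUnion.mpr ⟨⟨t, ht⟩, ha⟩)]
  exact (hFu ⟨t, ht⟩ a ha).2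

/-- Preimage of a Gδ set under a continuous map is Gδ. -/
lemma isGdelta_preimage {X : Type u} {Y : Type v} [TopologicalSpace X] [TopologicalSpace Y]
    {g : X → Y} (hg : Continuous g) {A : Set Y} (hA : IsGδ A) : IsGδ (g ⁻¹' A) := by
  obtain ⟨T, hT, hTc, rfl⟩ := hA
  rw [preimage_sInter]
  exact IsGδ.biInter hTc fun t ht => ((hT t ht).preimage hg).isGδ

/-- Every spanning set of a vector space contains a basis. -/
lemma exists_basis_subset (K V : Type) [Field K] [AddCommGroup V] [Module K V]
    (t : Set V) (ht : Submodule.span K t = ⊤) :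
    ∃ (B : Set V) (b : Module.Basis B K V), B ⊆ t ∧ ∀ x : B, b x = (x : V) := by
  let li : LinearIndepOn K id (∅ : Set V) := linearIndepOn_empty K id
  exact ⟨li.extend (empty_subset t),
    Module.Basis.extendLe li (empty_subset t) (le_of_eq ht.symm),
    li.extend_subset _,
    fun x => Module.Basis.extendLe_apply_self li (empty_subset t) (le_of_eq ht.symm) x⟩

/-- A divisible abelian group of cardinality at most `2 ^ #ι` (with `ι` infinite) is a quotient
of `ℤ_p ^ ι`. -/
lemma exists_surj_hom (E : Type) [AddCommGroup E]
    (hBaer : Module.Baer ℤ E)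
    (ι : Type) [Infinite ι]
    (hcard : Cardinal.mk E ≤ 2 ^ Cardinal.mk ι)
    (p : ℕ) [Fact p.Prime] :
    ∃ f : (ι → ℤ_[p]) →+ E, Function.Surjective f := by
  classical
  let K := FractionRing ℤ
  let V := LocalizedModule (nonZeroDivisors ℤ) (ι → ℤ_[p])
  let ρ : (ι → ℤ_[p]) →ₗ[ℤ] V := LocalizedModule.mkLinearMap (nonZeroDivisors ℤ) (ι → ℤ_[p])
  have hρ : Function.Injective ρ := by
    rw [← LinearMap.ker_eq_bot, Submodule.eq_bot_iff]
    intro m hm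
    obtain ⟨r, hr, hrm⟩ := LocalizedModule.mem_ker_mkLinearMap_iff.mp hm
    rcases smul_eq_zero.mp hrm with h | h
    · exact absurd h (nonZeroDivisors.ne_zero hr)
    · exact h
  have hspan : Submodule.span K (Set.range ρ) = ⊤ := by
    rw [Submodule.eq_top_iff']
    intro v
    induction v using LocalizedModule.induction_on with
    | h m s =>
      have : LocalizedModule.mk m s = (Localization.mk 1 s : K) • (ρ m) := by
        show _ = _ • LocalizedModule.mk m 1
        rw [LocalizedModule.mk_smul_mk, one_smul, mul_one]
      rw [this]
      exact Submodule.smul_mem _ _ (Submodule.subset_span ⟨m, rfl⟩)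
  have hKcard : Cardinal.mk K = Cardinal.aleph0 := by
    rw [Cardinal.mk_congr (FractionRing.algEquiv ℤ ℚ).toEquiv]
    exact Cardinal.mkRat
  have h2M : (2 : Cardinal) ^ Cardinal.mk ι ≤ Cardinal.mk (ι → ℤ_[p]) := by
    rw [← Cardinal.power_def]
    exact Cardinal.power_le_power_right (Cardinal.two_le_iff.mpr ⟨0, 1, zero_ne_one⟩)
  have hV2 : (2 : Cardinal) ^ Cardinal.mk ι ≤ Cardinal.mk V :=
    h2M.trans (Cardinal.mk_le_of_injective hρ)
  have haleph : Cardinal.aleph0 < 2 ^ Cardinal.mk ι :=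
    lt_of_lt_of_le (Cardinal.cantor _)
      (Cardinal.power_le_power_left two_ne_zero (Cardinal.aleph0_le_mk ι))
  obtain ⟨B, b, hBsub, hbb⟩ := exists_basis_subset K V (Set.range ρ) hspan
  haveI : Countable K := Cardinal.mk_le_aleph0_iff.mp (le_of_eq hKcard)
  haveI : Infinite B := by
    by_contra hfin
    haveI : Finite B := not_infinite_iff_finite.mp hfin
    have : Cardinal.mk V ≤ Cardinal.aleph0 := by
      rw [b.repr.toEquiv.cardinal_eq]
      exact Cardinal.mk_le_aleph0
    exact absurd (hV2.trans this) (not_le.mpr haleph)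
  have hBcard : Cardinal.mk E ≤ Cardinal.mk B := by
    refine hcard.trans ?_
    have heq : Cardinal.mk V = Cardinal.mk B ⊔ Cardinal.mk K := by
      rw [b.repr.toEquiv.cardinal_eq]
      exact Cardinal.mk_finsupp_of_infinite _ _
    rcases le_total (Cardinal.mk B) (Cardinal.mk K) with h | h
    · exact absurd (hV2.trans (le_of_eq (by rw [heq, sup_eq_right.mpr h, hKcard])))
        (not_le.mpr haleph)
    · exact le_of_le_of_eq hV2 (by rw [heq, sup_eq_left.mpr h])
  obtain ⟨j⟩ := Cardinal.le_def _ _ |>.mp hBcard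
  let σ : B → E := Function.invFun j
  have hσ : Function.Surjective σ := Function.invFun_surjective j.injective
  have key : ∀ x : E, ∃ g : K →+ E, g 1 = x := by
    intro x
    obtain ⟨h, hh⟩ := hBaer.extension_property_addMonoidHom
      (algebraMap ℤ K).toAddMonoidHom (IsFractionRing.injective ℤ K) (zmultiplesHom E x)
    refine ⟨h, ?_⟩
    have := congrArg (fun g => g 1) hh
    simpa using this
  choose g hg using key
  let H : (B →₀ K) →+ E := Finsupp.liftAddHom (fun β => g (σ β))
  let e : V →+ E := H.comp b.repr.toLinearMap.toAddMonoidHom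
  refine ⟨e.comp ρ.toAddMonoidHom, ?_⟩
  intro x
  obtain ⟨β₀, hβ₀⟩ := hσ x
  obtain ⟨m, hm⟩ := hBsub β₀.2
  refine ⟨m, ?_⟩
  have hbm : ρ m = b β₀ := hm.trans (hbb β₀).symm
  show H (b.repr.toLinearMap (ρ m)) = x
  rw [LinearEquiv.coe_coe, hbm, b.repr_self, Finsupp.liftAddHom_apply_single, hg, hβ₀]

/-- Let `E` be a divisible abelian group with `|E| ≤ 2^λ` for an infinite cardinal `λ`
(realized by an infinite index type `ι`), and let `p` be a prime. Then there is a group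
homomorphism `φ : ℤ_p^{ω₁ × λ} → E` such that (a) every fiber of `φ` is Gδ-dense in
`ℤ_p^{ω₁ × λ}`, and (b) for every abelian topological group `C` and every group homomorphism
`ψ : C → E`, the pullback `{(z, c) | φ z = ψ c}` is Gδ-dense in `ℤ_p^{ω₁ × λ} × C`.
Here `ω₁` is realized as `(Cardinal.aleph 1).out`, a type of cardinality `ℵ₁`. -/
theorem exists_hom_with_gdelta_dense_fibers
    (E : Type) [AddCommGroup E]
    (hdiv : ∀ (x : E) (n : ℕ), 0 < n → ∃ y : E, n • y = x)
    (ι : Type) [Infinite ι]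
    (hcard : Cardinal.mk E ≤ 2 ^ Cardinal.mk ι)
    (p : ℕ) [Fact p.Prime] :
    ∃ φ : (((Cardinal.aleph 1).out × ι → ℤ_[p]) →+ E),
      (∀ x : E, GdeltaDense (⇑φ ⁻¹' {x})) ∧
      (∀ (C : Type) [AddCommGroup C] [TopologicalSpace C] [IsTopologicalAddGroup C],
        ∀ ψ : C →+ E,
          GdeltaDense {zc : ((Cardinal.aleph 1).out × ι → ℤ_[p]) × C |
            φ zc.1 = ψ zc.2}) := by
  classical
  -- E is divisible, hence a Baer (injective) ℤ-module
  haveI : DivisibleBy E ℕ :=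
    { div := fun a n => if h : 0 < n then Classical.choose (hdiv a n h) else 0
      div_zero := fun a => by simp
      div_cancel := fun {n} a hn => by
        rw [dif_pos (Nat.pos_of_ne_zero hn)]
        exact Classical.choose_spec (hdiv a n (Nat.pos_of_ne_zero hn)) }
  haveI : DivisibleBy E ℤ := AddGroup.divisibleByIntOfDivisibleByNat E
  have hBaer : Module.Baer ℤ E := Module.Baer.of_divisible E
  obtain ⟨f, hf⟩ := exists_surj_hom E hBaer ι hcard p
  set Ω := (Cardinal.aleph 1).out with hΩ
  -- assemble φ by extending the direct sum of copies of `f` over the columns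
  let X := DirectSum Ω (fun _ : Ω => ι → ℤ_[p])
  let i : X →+ (Ω × ι → ℤ_[p]) :=
    AddMonoidHom.mk' (fun x => fun q => x q.1 q.2)
      (fun a b => funext fun q => by show (a + b) q.1 q.2 = _; rw [DirectSum.add_apply]; rfl)
  have hi : Function.Injective i := by
    intro a b hab
    exact DFinsupp.ext fun α => funext fun j => congrFun hab (α, j)
  let g : X →+ E := DirectSum.toAddMonoid (fun _ => f)
  obtain ⟨φ, hφ⟩ := hBaer.extension_property_addMonoidHom i hi g
  -- KEY property: prescribing countably many coordinates, φ still attains every value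
  have KEY : ∀ S : Set (Ω × ι), S.Countable →
      ∀ (z₀ : Ω × ι → ℤ_[p]) (x : E), ∃ z, (∀ q ∈ S, z q = z₀ q) ∧ φ z = x := by
    intro S hS z₀ x
    have hT : (Prod.fst '' S).Countable := hS.image _
    have hα : ∃ α : Ω, α ∉ Prod.fst '' S := by
      by_contra h
      push_neg at h
      have huniv : (univ : Set Ω) ⊆ Prod.fst '' S := fun α _ => h α
      have : (univ : Set Ω).Countable := hT.mono huniv
      have hcnt : Countable Ω := countable_univ_iff.mp this
      have : Cardinal.mk Ω ≤ Cardinal.aleph0 := Cardinal.mk_le_aleph0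
      rw [hΩ, Cardinal.mk_out] at this
      exact absurd this (not_le.mpr Cardinal.aleph0_lt_aleph_one)
    obtain ⟨α, hα⟩ := hα
    let z' : Ω × ι → ℤ_[p] := fun q => if q ∈ S then z₀ q else 0
    obtain ⟨w', hw'⟩ := hf (x - φ z')
    refine ⟨z' + i (DirectSum.of _ α w'), ?_, ?_⟩
    · intro q hq
      have hq1 : (DirectSum.of (fun _ : Ω => ι → ℤ_[p]) α w') q.1 = 0 :=
        DirectSum.of_eq_of_ne _ _ _ (fun h => hα ⟨q, hq, h⟩)
      show z' q + (DirectSum.of (fun _ : Ω => ι → ℤ_[p]) α w') q.1 q.2 = z₀ q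
      rw [hq1]
      show z' q + 0 = z₀ q
      rw [add_zero]
      exact if_pos hq
    · rw [map_add]
      have : φ (i (DirectSum.of _ α w')) = g (DirectSum.of _ α w') :=
        DFunLike.congr_fun hφ (DirectSum.of _ α w')
      rw [this]
      show φ z' + (DirectSum.toAddMonoid (fun _ => f)) (DirectSum.of _ α w') = x
      rw [DirectSum.toAddMonoid_of, hw']
      abel
  refine ⟨φ, ?_, ?_⟩
  · -- (a) fibers are Gδ-dense
    intro x A hA hne
    obtain ⟨z₀, hz₀⟩ := hne
    obtain ⟨S, hS, hSA⟩ := gdelta_pi_aux (β := Ω × ι) (X := ℤ_[p]) hA hz₀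
    obtain ⟨z, hzS, hzφ⟩ := KEY S hS z₀ x
    exact ⟨z, hzφ, hSA z hzS⟩
  · -- (b) pullbacks are Gδ-dense
    intro C _ _ _ ψ A hA hne
    obtain ⟨⟨z₀, c₀⟩, hz₀⟩ := hne
    have hA' : IsGδ ((fun z : Ω × ι → ℤ_[p] => (z, c₀)) ⁻¹' A) :=
      isGdelta_preimage (g := fun z => (z, c₀)) (A := A)
        (Continuous.prodMk continuous_id continuous_const) hA
    obtain ⟨S, hS, hSA⟩ := gdelta_pi_aux hA' hz₀
    obtain ⟨z, hzS, hzφ⟩ := KEY S hS z₀ (ψ c₀)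
    exact ⟨(z, c₀), hzφ, hSA z hzS⟩
end
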